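/- For every fixed M ∈ ℕ, the node entailment relation ⊨_M is a well-quasi-order on nodes: every infinite sequence (Z₁,IA₁), (Z₂,IA₂), … of nodes contains indices i < j such that (Zᵢ,IAᵢ) ⊨_M (Zⱼ,IAⱼ). -/

import Mathlib

open scoped Classical NNReal

namespace ATAPaper

/-! ## Intervals with natural endpoints (possibly unbounded) -/

inductive NInterval where
  | cc (a b : ℕ)
  | co (a b : ℕ)
  | oc (a b : ℕ)
  | oo (a b : ℕ)
  | ci (a : ℕ)
  | oi (a : ℕ)
deriving DecidableEq

/-- Membership of a nonnegative real in an interval. -/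
def NInterval.mem (v : ℝ≥0) : NInterval → Prop
  | .cc a b => (a : ℝ≥0) ≤ v ∧ v ≤ (b : ℝ≥0)
  | .co a b => (a : ℝ≥0) ≤ v ∧ v < (b : ℝ≥0)
  | .oc a b => (a : ℝ≥0) < v ∧ v ≤ (b : ℝ≥0)
  | .oo a b => (a : ℝ≥0) < v ∧ v < (b : ℝ≥0)
  | .ci a => (a : ℝ≥0) ≤ v
  | .oi a => (a : ℝ≥0) < v

/-- The largest constant appearing in an interval. -/
def NInterval.bound : NInterval → ℕ
  | .cc a b | .co a b | .oc a b | .oo a b => max a b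
  | .ci a | .oi a => a

/-! ## Transition formulas `Φ(Q)` with reset `x.φ` and deactivation `x̄.φ` -/

inductive TF (Q : Type*) where
  | tt
  | ff
  | loc (q : Q)
  | guard (I : NInterval)
  | and (φ ψ : TF Q)
  | or (φ ψ : TF Q)
  | reset (φ : TF Q)
  | deact (φ : TF Q)

/-- A state of a 1-ATA is a location together with a clock value which is
either inactive (`none` = ⊥) or a nonnegative real.  A configuration is a
finite set of states. -/
abbrev Config (Q : Type*) := Finset (Q × Option ℝ≥0)

section BasicDefs

variable {Q A : Type*}

/-- `M ⊨_v φ`. -/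
def TF.sat (M : Config Q) : TF Q → Option ℝ≥0 → Prop
  | .tt, _ => True
  | .ff, _ => False
  | .loc q, v => (q, v) ∈ M
  | .guard I, v => v = none ∨ ∃ r, v = some r ∧ I.mem r
  | .and φ ψ, v => φ.sat M v ∧ ψ.sat M v
  | .or φ ψ, v => φ.sat M v ∨ ψ.sat M v
  | .reset φ, _ => φ.sat M (some 0)
  | .deact φ, _ => φ.sat M none

/-- `M` is a minimal model of `φ` on `v`. -/
def MinModel (M : Config Q) (v : Option ℝ≥0) (φ : TF Q) : Prop :=
  φ.sat M v ∧ ∀ M' ⊂ M, ¬ φ.sat M' v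

/-- The disjuncts of a formula (assumed to be in disjunctive normal form). -/
def TF.disjuncts : TF Q → List (TF Q)
  | .or φ ψ => φ.disjuncts ++ ψ.disjuncts
  | φ => [φ]

/-- The intervals occurring (anywhere) in a transition formula. -/
def TF.guards : TF Q → List NInterval
  | .guard I => [I]
  | .and φ ψ | .or φ ψ => φ.guards ++ ψ.guards
  | .reset φ | .deact φ => φ.guards
  | _ => []

/-! ## One-clock alternating timed automata with deactivation -/

structure OneATA (Q A : Type*) where
  init : Q
  final : Set Q
  delta : Q → A → Option (TF Q)

/-- `C` is one of the disjuncts of `δ(q,a)`. -/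
def OneATA.isTarget (𝒜 : OneATA Q A) (q : Q) (a : A) (C : TF Q) : Prop :=
  ∃ φ, 𝒜.delta q a = some φ ∧ C ∈ φ.disjuncts

/-- Time elapse on a configuration: add `d` to every active value, keep `⊥`. -/
noncomputable def Config.delay (γ : Config Q) (d : ℝ≥0) : Config Q :=
  γ.image (fun s => (s.1, s.2.map (· + d)))

/-- Discrete transition `γ →^{a,C} γ'` where the target `χ` assigns to each
state of `γ` a disjunct of the corresponding transition formula. -/
def OneATA.DStep (𝒜 : OneATA Q A) (γ : Config Q) (a : A)
    (χ : Q × Option ℝ≥0 → TF Q) (γ' : Config Q) : Prop :=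
  (∀ s ∈ γ, 𝒜.isTarget s.1 a (χ s)) ∧
  ∃ Mo : Q × Option ℝ≥0 → Config Q,
    (∀ s ∈ γ, MinModel (Mo s) s.2 (χ s)) ∧ γ' = γ.biUnion Mo

/-- Combined transition `γ →^{d,a,C} γ'`. -/
def OneATA.Step (𝒜 : OneATA Q A) (γ : Config Q) (d : ℝ≥0) (a : A)
    (χ : Q × Option ℝ≥0 → TF Q) (γ' : Config Q) : Prop :=
  𝒜.DStep (γ.delay d) a χ γ'

/-- A configuration is accepting if all its locations are accepting. -/
def OneATA.AcceptingCfg (𝒜 : OneATA Q A) (γ : Config Q) : Prop :=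
  ∀ s ∈ γ, s.1 ∈ 𝒜.final

/-- Accepting runs on (finite) timed words. -/
inductive OneATA.AccRun (𝒜 : OneATA Q A) : Config Q → List (ℝ≥0 × A) → Prop
  | nil {γ} : 𝒜.AcceptingCfg γ → 𝒜.AccRun γ []
  | cons {γ γ' : Config Q} {d : ℝ≥0} {a : A} {w : List (ℝ≥0 × A)}
      (χ : Q × Option ℝ≥0 → TF Q) :
      𝒜.Step γ d a χ γ' → 𝒜.AccRun γ' w → 𝒜.AccRun γ ((d, a) :: w)

/-- The language of a 1-ATA. -/
def OneATA.Lang (𝒜 : OneATA Q A) : Set (List (ℝ≥0 × A)) :=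
  {w | 𝒜.AccRun {(𝒜.init, some 0)} w}

/-- Reachability between configurations by timed and discrete transitions. -/
inductive OneATA.Reach (𝒜 : OneATA Q A) : Config Q → Config Q → Prop
  | refl (γ) : 𝒜.Reach γ γ
  | delay {γ γ'} (d : ℝ≥0) : 𝒜.Reach γ γ' → 𝒜.Reach γ (γ'.delay d)
  | step {γ γ' γ''} (a : A) (χ) : 𝒜.Reach γ γ' → 𝒜.DStep γ' a χ γ'' → 𝒜.Reach γ γ''

/-- The width of a configuration: the number of active states. -/
noncomputable def Config.width (γ : Config Q) : ℕ :=
  (γ.filter (fun s => s.2 ≠ none)).card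

/-- The 1-ATA has width at most `k`. -/
def OneATA.WidthBounded (𝒜 : OneATA Q A) (k : ℕ) : Prop :=
  ∀ γ, 𝒜.Reach {(𝒜.init, some 0)} γ → γ.width ≤ k

/-- All constants appearing in the automaton are at most `M`. -/
def OneATA.BoundedBy (𝒜 : OneATA Q A) (M : ℕ) : Prop :=
  ∀ q a φ, 𝒜.delta q a = some φ → ∀ I ∈ φ.guards, I.bound ≤ M

/-! ## Region equivalence and entailment on configurations -/

/-- `γ ≃_M γ'` via the bijection `h`. -/
def RegionEquivWith (M : ℕ) (γ γ' : Config Q)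
    (h : Q × Option ℝ≥0 → Q × Option ℝ≥0) : Prop :=
  Set.BijOn h ↑γ ↑γ' ∧
  (∀ s ∈ γ, (h s).1 = s.1) ∧
  (∀ s ∈ γ, ((h s).2 = none ↔ s.2 = none)) ∧
  (∀ s ∈ γ, ∀ r r', s.2 = some r → (h s).2 = some r' →
    ((r ≤ (M : ℝ≥0)) ↔ (r' ≤ (M : ℝ≥0))) ∧
    (r ≤ (M : ℝ≥0) →
      (⌊(r : ℝ)⌋ = ⌊(r' : ℝ)⌋ ∧ (Int.fract (r : ℝ) = 0 ↔ Int.fract (r' : ℝ) = 0)))) ∧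
  (∀ s₁ ∈ γ, ∀ s₂ ∈ γ, ∀ r₁ r₂ r₁' r₂',
    s₁.2 = some r₁ → s₂.2 = some r₂ → (h s₁).2 = some r₁' → (h s₂).2 = some r₂' →
    r₁ ≤ (M : ℝ≥0) → r₂ ≤ (M : ℝ≥0) →
    (Int.fract (r₁ : ℝ) ≤ Int.fract (r₂ : ℝ) ↔ Int.fract (r₁' : ℝ) ≤ Int.fract (r₂' : ℝ)))

/-- Region equivalence `γ ≃_M γ'`. -/
def RegionEquiv (M : ℕ) (γ γ' : Config Q) : Prop := ∃ h, RegionEquivWith M γ γ' h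

/-- Configuration entailment `γ ⊨_M γ'` : some subset of `γ'` is region equivalent
to `γ`. -/
def CfgEntails (M : ℕ) (γ γ' : Config Q) : Prop :=
  ∃ γ'' ⊆ γ', RegionEquiv M γ γ''

end BasicDefs


/-! ## MTL (negation normal form) -/

inductive MTL (A : Type*) where
  | atom (a : A)
  | natom (a : A)
  | conj (φ ψ : MTL A)
  | disj (φ ψ : MTL A)
  | next (I : NInterval) (φ : MTL A)
  | untl (I : NInterval) (φ ψ : MTL A)

section MTLDefs

variable {A : Type*}

/-- Accumulated time `Σ_{c=1}^{p} d_c` of the first `p` letters of a timed word. -/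
def twtime (w : List (ℝ≥0 × A)) (p : ℕ) : ℝ≥0 := ((w.take p).map Prod.fst).sum

/-- `(w, i) ⊨ φ` (positions are 0-based). -/
def MTL.holdsAt (w : List (ℝ≥0 × A)) : MTL A → ℕ → Prop
  | .atom a, i => ∃ h : i < w.length, (w.get ⟨i, h⟩).2 = a
  | .natom a, i => ∃ h : i < w.length, (w.get ⟨i, h⟩).2 ≠ a
  | .conj φ ψ, i => φ.holdsAt w i ∧ ψ.holdsAt w i
  | .disj φ ψ, i => φ.holdsAt w i ∨ ψ.holdsAt w i
  | .next I φ, i => ∃ h : i + 1 < w.length, φ.holdsAt w (i + 1) ∧ I.mem (w.get ⟨i + 1, h⟩).1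
  | .untl I φ ψ, i => ∃ k, i ≤ k ∧ k < w.length ∧ ψ.holdsAt w k ∧
      I.mem (twtime w (k + 1) - twtime w (i + 1)) ∧
      ∀ j, i ≤ j → j < k → φ.holdsAt w j

/-- The language of an MTL formula (`w ⊨ φ` iff `φ` holds at the first position). -/
def MTL.Lang (φ : MTL A) : Set (List (ℝ≥0 × A)) := {w | φ.holdsAt w 0}

/-- Pure LTL formulas: every interval is `[0, ∞)`. -/
def MTL.isPure : MTL A → Bool
  | .atom _ | .natom _ => true
  | .conj φ ψ | .disj φ ψ => φ.isPure && ψ.isPure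
  | .next I φ => decide (I = NInterval.ci 0) && φ.isPure
  | .untl I φ ψ => decide (I = NInterval.ci 0) && φ.isPure && ψ.isPure

/-- The subformulas of an MTL formula. -/
def MTL.subfs : MTL A → List (MTL A)
  | .atom a => [.atom a]
  | .natom a => [.natom a]
  | .conj φ ψ => .conj φ ψ :: (φ.subfs ++ ψ.subfs)
  | .disj φ ψ => .disj φ ψ :: (φ.subfs ++ ψ.subfs)
  | .next I φ => .next I φ :: φ.subfs
  | .untl I φ ψ => .untl I φ ψ :: (φ.subfs ++ ψ.subfs)

/-- One-sided MTL: in every Until, the left argument is a pure LTL formula. -/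
def MTL.oneSided : MTL A → Prop
  | .atom _ | .natom _ => True
  | .conj φ ψ | .disj φ ψ => φ.oneSided ∧ ψ.oneSided
  | .next _ φ => φ.oneSided
  | .untl _ φ ψ => φ.isPure = true ∧ ψ.oneSided

/-! ## The MTL-to-1-ATA construction with deactivation -/

/-- Locations of the constructed automaton: the initial location `φ_init`,
locations for formulas (in particular Until subformulas and `φ` itself), and
locations `(X_I ψ)ʳ`. -/
inductive MLoc (A : Type*) where
  | start
  | form (ψ : MTL A)
  | nextr (I : NInterval) (ψ : MTL A)

/-- Prefix `x̄.` if `ψ` is pure LTL, and nothing otherwise. -/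
def barP (ψ : MTL A) (φ : TF (MLoc A)) : TF (MLoc A) :=
  if ψ.isPure then .deact φ else φ

/-- Prefix `x̄.` if `ψ` is pure LTL, and `x.` otherwise. -/
def rhoP (ψ : MTL A) (φ : TF (MLoc A)) : TF (MLoc A) :=
  if ψ.isPure then .deact φ else .reset φ

variable [DecidableEq A]

/-- The transition formula `δ(ψ, a)` for subformulas `ψ`. -/
def dform : MTL A → A → TF (MLoc A)
  | .atom b, a => if b = a then .tt else .ff
  | .natom b, a => if b = a then .ff else .tt
  | .conj φ ψ, a => .and (barP φ (dform φ a)) (barP ψ (dform ψ a))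
  | .disj φ ψ, a => .or (barP φ (dform φ a)) (barP ψ (dform ψ a))
  | .next I ψ, _ => .reset (.loc (.nextr I ψ))
  | .untl I φ ψ, a =>
      .or (.and (rhoP ψ (dform ψ a)) (.guard I))
          (.and (rhoP φ (dform φ a)) (.loc (.form (.untl I φ ψ))))

/-- The transition function of the constructed automaton `A'_φ`. -/
def mlocDelta (φ₀ : MTL A) : MLoc A → A → Option (TF (MLoc A))
  | .start, a => some (rhoP φ₀ (dform φ₀ a))
  | .form ψ, a => some (dform ψ a)
  | .nextr I ψ, a => some (.and (.guard I) (rhoP ψ (dform ψ a)))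

/-- The 1-ATA `A'_φ` constructed from an MTL formula `φ`:
initial location `φ_init`, no accepting locations. -/
def ataOf (φ : MTL A) : OneATA (MLoc A) A :=
  { init := .start, final := ∅, delta := mlocDelta φ }

end MTLDefs

section KB
variable {A : Type*}
/-- The recursive width bound `k_ψ`. -/
def kBound : MTL A → ℕ
  | .atom _ | .natom _ => 1
  | .conj φ ψ => if (MTL.conj φ ψ).isPure then 1 else kBound φ + kBound ψ
  | .disj φ ψ => if (MTL.disj φ ψ).isPure then 1 else max (kBound φ) (kBound ψ)
  | .next I φ => if (MTL.next I φ).isPure then 1 else kBound φ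
  | .untl I φ ψ => if (MTL.untl I φ ψ).isPure then 1 else kBound ψ
end KB


/-! ## Zones (variables `x_{q,i}`), nodes and their configuration semantics -/

section ZoneDefs

variable {Q A : Type*}

/-- A (semantic) zone: a finite set of variables `x_{q,i}` together with the
set of valuations satisfying its constraints. -/
structure SemZone (Q : Type*) where
  vars : Finset (Q × ℕ)
  val : ((Q × ℕ) → ℝ≥0) → Prop

/-- `γ` satisfies the node `(Z, IA)` via the surjection `h`. -/
def NodeSatVia (Z : SemZone Q) (IA : Finset (Q × ℕ)) (γ : Config Q)
    (h : Q × ℕ → Q × Option ℝ≥0) : Prop :=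
  (∀ y ∈ Z.vars ∪ IA, (h y).1 = y.1) ∧
  (∀ y ∈ Z.vars ∪ IA, h y ∈ γ) ∧
  (∀ s ∈ γ, ∃ y ∈ Z.vars ∪ IA, h y = s) ∧
  (∀ y ∈ IA, (h y).2 = none) ∧
  ∃ ν : (Q × ℕ) → ℝ≥0, (∀ y ∈ Z.vars, (h y).2 = some (ν y)) ∧ Z.val ν

/-- `γ ∈ ⟦(Z, IA)⟧`. -/
def NodeSat (Z : SemZone Q) (IA : Finset (Q × ℕ)) (γ : Config Q) : Prop :=
  ∃ h, NodeSatVia Z IA γ h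

/-- The special empty node `(Z_∅, {})`, satisfied exactly by the empty
configuration. -/
def emptySemZone {Q : Type*} : SemZone Q := ⟨∅, fun _ => True⟩

/-- The initial node `((x_{q₀,1} = 0), ∅)`. -/
def initSemZone (𝒜 : OneATA Q A) : SemZone Q :=
  ⟨{(𝒜.init, 1)}, fun ν => ν (𝒜.init, 1) = 0⟩

/-! ### Simple clauses and the successor computation -/

/-- A clause is a conjunction of atoms of the form `true`, `false`, `q`, `I`,
`x.q`, `x̄.q`. -/
def TF.isSimpleConj : TF Q → Bool
  | .tt => true
  | .ff => true
  | .loc _ => true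
  | .guard _ => true
  | .reset (.loc _) => true
  | .deact (.loc _) => true
  | .and φ ψ => φ.isSimpleConj && ψ.isSimpleConj
  | _ => false

/-- Every transition formula of the automaton is in disjunctive normal form. -/
def OneATA.normalized (𝒜 : OneATA Q A) : Prop :=
  ∀ q a φ, 𝒜.delta q a = some φ → ∀ C ∈ φ.disjuncts, C.isSimpleConj = true

/-- The interval atoms of a clause. -/
def TF.topGuards : TF Q → List NInterval
  | .guard I => [I]
  | .and φ ψ => φ.topGuards ++ ψ.topGuards
  | _ => []

/-- The location atoms `q` of a clause. -/
def TF.atomLocs : TF Q → List Q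
  | .loc q => [q]
  | .and φ ψ => φ.atomLocs ++ ψ.atomLocs
  | _ => []

/-- The reset atoms `x.q` of a clause. -/
def TF.resetLocs : TF Q → List Q
  | .reset (.loc q) => [q]
  | .and φ ψ => φ.resetLocs ++ ψ.resetLocs
  | _ => []

/-- The deactivation atoms `x̄.q` of a clause. -/
def TF.deactLocs : TF Q → List Q
  | .deact (.loc q) => [q]
  | .and φ ψ => φ.deactLocs ++ ψ.deactLocs
  | _ => []

/-- The inactive variable set of the successor node: `x'_{q,0}` for every atom
`x̄.q`, and for every atom `q` of a clause of an inactive variable. -/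
noncomputable def succIA (Z : SemZone Q) (IA : Finset (Q × ℕ))
    (T : Q × ℕ → TF Q) : Finset (Q × ℕ) :=
  ((Z.vars ∪ IA).biUnion fun y => ((T y).deactLocs.toFinset).image fun q => (q, 0)) ∪
  (IA.biUnion fun y => ((T y).atomLocs.toFinset).image fun q => (q, 0))

/-- Number of active variables whose clause contains the atom `q`. -/
noncomputable def copyCount (Z : SemZone Q) (T : Q × ℕ → TF Q) (q : Q) : ℕ :=
  (Z.vars.filter fun y => q ∈ (T y).atomLocs).card

/-- The active variable set of the successor node: `x'_{q,1}` for resets, and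
fresh variables `x'_{q,ℓ}` with `2 ≤ ℓ` (smallest free indices) for atoms `q`
of clauses of active variables. -/
noncomputable def succVars (Z : SemZone Q) (IA : Finset (Q × ℕ))
    (T : Q × ℕ → TF Q) : Finset (Q × ℕ) :=
  (((Z.vars ∪ IA).biUnion fun y => (T y).resetLocs.toFinset).image fun q => (q, 1)) ∪
  ((Z.vars.biUnion fun y => (T y).atomLocs.toFinset).biUnion fun q =>
    (Finset.Icc 2 (copyCount Z T q + 1)).image fun i => (q, i))

/-- The successor computation on nodes:  time elapse, guard intersection,
reset/deactivation with fresh variables, and renaming (canonicalization is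
semantically transparent).  `T` assigns to every variable of the node a
disjunct of the transition formula of its location on the letter `a`.  If a
chosen disjunct is `false`, the target is discarded; if all chosen disjuncts
are `true`, the successor is the special empty node. -/
def Succ (𝒜 : OneATA Q A) (Z : SemZone Q) (IA : Finset (Q × ℕ)) (a : A)
    (T : Q × ℕ → TF Q) (Z' : SemZone Q) (IA' : Finset (Q × ℕ)) : Prop :=
  (∀ y ∈ Z.vars ∪ IA, 𝒜.isTarget y.1 a (T y)) ∧
  (∀ y ∈ Z.vars ∪ IA, T y ≠ TF.ff) ∧
  ((∀ y ∈ Z.vars ∪ IA, T y = TF.tt) → (Z' = emptySemZone ∧ IA' = ∅)) ∧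
  ((¬ ∀ y ∈ Z.vars ∪ IA, T y = TF.tt) →
    IA' = succIA Z IA T ∧
    Z'.vars = succVars Z IA T ∧
    ∃ g : (Q × ℕ) → Q → ℕ,
      (∀ y ∈ Z.vars, ∀ q ∈ (T y).atomLocs, 2 ≤ g y q ∧ g y q ≤ copyCount Z T q + 1) ∧
      (∀ y₁ ∈ Z.vars, ∀ y₂ ∈ Z.vars, ∀ q, q ∈ (T y₁).atomLocs → q ∈ (T y₂).atomLocs →
        g y₁ q = g y₂ q → y₁ = y₂) ∧
      Z'.val = fun ν' => ∃ (ν : (Q × ℕ) → ℝ≥0) (d : ℝ≥0), Z.val ν ∧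
        (∀ y ∈ Z.vars, ∀ I ∈ (T y).topGuards, I.mem (ν y + d)) ∧
        (∀ y ∈ Z.vars ∪ IA, ∀ q ∈ (T y).resetLocs, ν' (q, 1) = 0) ∧
        (∀ y ∈ Z.vars, ∀ q ∈ (T y).atomLocs, ν' (q, g y q) = ν y + d))

/-- Time elapse on a single state. -/
noncomputable def stDelay (s : Q × Option ℝ≥0) (d : ℝ≥0) : Q × Option ℝ≥0 :=
  (s.1, s.2.map (· + d))

/-- `γ →^{d,a,(C₁,…,C_m)} γ'` where the disjuncts chosen in the step correspond,
via a surjection witnessing `γ ∈ ⟦(Z,IA)⟧`, to the target tuple `T` of the node. -/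
def StepMatching (𝒜 : OneATA Q A) (Z : SemZone Q) (IA : Finset (Q × ℕ))
    (γ : Config Q) (d : ℝ≥0) (a : A) (T : Q × ℕ → TF Q) (γ' : Config Q) : Prop :=
  ∃ h χ, NodeSatVia Z IA γ h ∧
    (∀ y ∈ Z.vars ∪ IA, χ (stDelay (h y) d) = T y) ∧
    𝒜.Step γ d a χ γ'

/-- Reachability in the zone graph. -/
inductive ZReach (𝒜 : OneATA Q A) :
    SemZone Q × Finset (Q × ℕ) → SemZone Q × Finset (Q × ℕ) → Prop
  | refl (n) : ZReach 𝒜 n n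
  | step {n₁ n₂ n₃} (a : A) (T) :
      ZReach 𝒜 n₁ n₂ → Succ 𝒜 n₂.1 n₂.2 a T n₃.1 n₃.2 → ZReach 𝒜 n₁ n₃

/-- A node is accepting if the locations of all its variables are accepting. -/
def AccNode (𝒜 : OneATA Q A) (Z : SemZone Q) (IA : Finset (Q × ℕ)) : Prop :=
  ∀ y ∈ Z.vars ∪ IA, y.1 ∈ 𝒜.final

/-! ### Entailment between nodes -/

/-- Node entailment `(Z,IA) ⊨_M (Z',IA')`. -/
def NodeEntails (M : ℕ) (Z : SemZone Q) (IA : Finset (Q × ℕ))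
    (Z' : SemZone Q) (IA' : Finset (Q × ℕ)) : Prop :=
  ∀ γ', NodeSat Z' IA' γ' → ∃ γ, NodeSat Z IA γ ∧ CfgEntails M γ γ'

/-- Classical region equivalence between valuations over the variable set `V`. -/
def ValRegEquiv (M : ℕ) (V : Finset (Q × ℕ)) (u u' : (Q × ℕ) → ℝ≥0) : Prop :=
  (∀ y ∈ V, ((u y ≤ (M : ℝ≥0)) ↔ (u' y ≤ (M : ℝ≥0))) ∧
    (u y ≤ (M : ℝ≥0) →
      (⌊(u y : ℝ)⌋ = ⌊(u' y : ℝ)⌋ ∧ (Int.fract (u y : ℝ) = 0 ↔ Int.fract (u' y : ℝ) = 0)))) ∧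
  (∀ y ∈ V, ∀ z ∈ V, u y ≤ (M : ℝ≥0) → u z ≤ (M : ℝ≥0) →
    (Int.fract (u y : ℝ) ≤ Int.fract (u z : ℝ) ↔
      Int.fract (u' y : ℝ) ≤ Int.fract (u' z : ℝ)))

/-- The bounded entailment check `(Z,IA) ⊨ᵇ_M (Z',IA')`, for zones over the same
variables, using the identity correspondence of variables. -/
def BoundedEntails (M : ℕ) (Z : SemZone Q) (IA : Finset (Q × ℕ))
    (Z' : SemZone Q) (IA' : Finset (Q × ℕ)) : Prop :=
  IA ⊆ IA' ∧ ∀ u', Z'.val u' → ∃ u, Z.val u ∧ ValRegEquiv M Z.vars u u'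

/-! ### Syntactic zones -/

/-- Comparison relations in zone constraints. -/
inductive ZRel | lt | le | gt | ge

def ZRel.holds : ZRel → ℝ → ℝ → Prop
  | .lt, x, y => x < y
  | .le, x, y => x ≤ y
  | .gt, x, y => x > y
  | .ge, x, y => x ≥ y

/-- A zone constraint: `y ∼ k` or `y − x ∼ k` with `k ∈ ℤ`. -/
inductive ZConstr (Q : Type*) where
  | single (y : Q × ℕ) (r : ZRel) (k : ℤ)
  | diff (y x : Q × ℕ) (r : ZRel) (k : ℤ)

def ZConstr.holds (ν : (Q × ℕ) → ℝ≥0) : ZConstr Q → Prop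
  | .single y r k => r.holds (ν y : ℝ) (k : ℝ)
  | .diff y x r k => r.holds ((ν y : ℝ) - (ν x : ℝ)) (k : ℝ)

/-- The variables occurring in a constraint. -/
def ZConstr.varsIn : ZConstr Q → List (Q × ℕ)
  | .single y _ _ => [y]
  | .diff y x _ _ => [y, x]

/-- A (syntactic) zone: a finite set of variables and a finite conjunction of
constraints. -/
structure Zone (Q : Type*) where
  vars : Finset (Q × ℕ)
  constrs : List (ZConstr Q)

def Zone.satBy (Z : Zone Q) (ν : (Q × ℕ) → ℝ≥0) : Prop :=
  ∀ c ∈ Z.constrs, c.holds ν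

/-- Constraints only mention variables of the zone. -/
def Zone.wf (Z : Zone Q) : Prop :=
  ∀ c ∈ Z.constrs, ∀ v ∈ c.varsIn, v ∈ Z.vars

/-- The semantic zone of a syntactic zone. -/
def Zone.toSem (Z : Zone Q) : SemZone Q := ⟨Z.vars, Z.satBy⟩

/-! ### The `N'_r` sets for the entailment check -/

/-- Location preserving one-to-one mapping from `Var(Z)` to `Var(Z')`. -/
def LocPresInj (Z Z' : Zone Q) (r : Q × ℕ → Q × ℕ) : Prop :=
  Set.InjOn r ↑Z.vars ∧ (∀ y ∈ Z.vars, r y ∈ Z'.vars) ∧ ∀ y ∈ Z.vars, (r y).1 = y.1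

/-- `γ' ∈ N'_r` : `γ'` satisfies `(Z', IA')` via a surjection whose induced
valuation, transported back along `r`, is region equivalent to no valuation
satisfying `Z`. -/
def InNr (M : ℕ) (Z Z' : Zone Q) (IA' : Finset (Q × ℕ))
    (r : Q × ℕ → Q × ℕ) (γ' : Config Q) : Prop :=
  ∃ (h' : Q × ℕ → Q × Option ℝ≥0) (ν' : (Q × ℕ) → ℝ≥0),
    (∀ y ∈ Z'.vars ∪ IA', (h' y).1 = y.1) ∧
    (∀ y ∈ Z'.vars ∪ IA', h' y ∈ γ') ∧
    (∀ s ∈ γ', ∃ y ∈ Z'.vars ∪ IA', h' y = s) ∧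
    (∀ y ∈ IA', (h' y).2 = none) ∧
    (∀ y ∈ Z'.vars, (h' y).2 = some (ν' y)) ∧
    Z'.satBy ν' ∧
    ∀ ν, Z.satBy ν → ¬ ValRegEquiv M Z.vars ν (fun y => ν' (r y))

end ZoneDefs


/-! ## The zones `Z_φ` and `Z'_φ` constructed from a monotone 3-CNF formula -/

/-- The two locations `q_x` and `q_y`. -/
inductive XY | qx | qy
deriving DecidableEq

/-- The zone variables used in the reduction, for a formula with `m` clauses:
`px_j, py_j, nx_j, ny_j` (dummy clauses), `x^i_j, y^i_j` (clause literals) for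
`Z'_φ`, and `x⁺_j, y⁺_j, x⁻_j, y⁻_j` for `Z_φ`. -/
inductive MVar (m : ℕ) where
  | px (j : Fin 3)
  | py (j : Fin 3)
  | nx (j : Fin 3)
  | ny (j : Fin 3)
  | xc (i : Fin m) (j : Fin 3)
  | yc (i : Fin m) (j : Fin 3)
  | xp (j : Fin 3)
  | yp (j : Fin 3)
  | xm (j : Fin 3)
  | ym (j : Fin 3)
deriving DecidableEq

section Mono

variable {m : ℕ}

/-- The location of each variable. -/
def MVar.loc : MVar m → XY
  | .px _ | .nx _ | .xc _ _ | .xp _ | .xm _ => .qx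
  | .py _ | .ny _ | .yc _ _ | .yp _ | .ym _ => .qy

def MVar.inZ : MVar m → Prop
  | .xp _ | .yp _ | .xm _ | .ym _ => True
  | _ => False

/-- The variables of `Z_φ`. -/
def ZVars (m : ℕ) : Set (MVar m) := {y | y.inZ}

/-- The variables of `Z'_φ`. -/
def Z'Vars (m : ℕ) : Set (MVar m) := {y | ¬ y.inZ}

/-- `γ` satisfies the node `(Z, ∅)` (zone given semantically by the predicate
`P` on valuations, over the variable set `V`) via the surjection `h`. -/
def MSat (V : Set (MVar m)) (P : (MVar m → ℝ≥0) → Prop) (γ : Config XY)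
    (h : MVar m → XY × Option ℝ≥0) : Prop :=
  (∀ y ∈ V, (h y).1 = y.loc) ∧
  (∀ y ∈ V, h y ∈ γ) ∧
  (∀ s ∈ γ, ∃ y ∈ V, h y = s) ∧
  ∃ ν : MVar m → ℝ≥0, (∀ y ∈ V, (h y).2 = some (ν y)) ∧ P ν

/-- The constraints of the zone `Z_φ` (with `k` positive clauses and `m`
clauses in total). -/
def ZphiSat (m k : ℕ) (ν : MVar m → ℝ≥0) : Prop :=
  (∀ j : Fin 3, 0 ≤ (ν (.yp j) : ℝ) - ν (.xp j) ∧ (ν (.yp j) : ℝ) - ν (.xp j) ≤ 1) ∧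
  (∀ j : Fin 3, 1 < (ν (.ym j) : ℝ) - ν (.xm j) ∧ (ν (.ym j) : ℝ) - ν (.xm j) ≤ 2) ∧
  (∀ j : Fin 2, 1 ≤ (ν (.xp j.succ) : ℝ) - ν (.yp j.castSucc) ∧
      (ν (.xp j.succ) : ℝ) - ν (.yp j.castSucc) ≤ 5) ∧
  (∀ j : Fin 2, 1 ≤ (ν (.xm j.succ) : ℝ) - ν (.ym j.castSucc) ∧
      (ν (.xm j.succ) : ℝ) - ν (.ym j.castSucc) ≤ 5) ∧
  ((ν (.yp 2) : ℝ) < 14 * ((k : ℝ) + 1) - 2) ∧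
  ((ν (.xm 0) : ℝ) > 14 * ((k : ℝ) + 1) - 2) ∧
  ((ν (.ym 2) : ℝ) - ν (.xp 0) < 14 * ((m : ℝ) + 2) - 6)

/-- The constraints of the zone `Z'_φ`, for a monotone 3-CNF formula whose
`i`-th clause has literals on the propositional variables `lits i 0`,
`lits i 1`, `lits i 2`. -/
def Z'phiSat (m : ℕ) {PV : Type*} (lits : Fin m → Fin 3 → PV)
    (ν : MVar m → ℝ≥0) : Prop :=
  (∀ j : Fin 3, (ν (.px j) : ℝ) = 3 * (j : ℕ) ∧ (ν (.py j) : ℝ) = 3 * (j : ℕ)) ∧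
  (∀ j : Fin 3, (ν (.nx j) : ℝ) = 14 * ((m : ℝ) + 1) + 3 * (j : ℕ) ∧
      (ν (.ny j) : ℝ) = 14 * ((m : ℝ) + 1) + 3 * (j : ℕ) + 2) ∧
  (∀ (i : Fin m) (j : Fin 3),
      14 * ((i : ℕ) + 1 : ℝ) + 3 * (j : ℕ) ≤ (ν (.xc i j) : ℝ) ∧
      (ν (.xc i j) : ℝ) ≤ 14 * ((i : ℕ) + 1 : ℝ) + 3 * (j : ℕ) + 2 ∧
      14 * ((i : ℕ) + 1 : ℝ) + 3 * (j : ℕ) ≤ (ν (.yc i j) : ℝ) ∧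
      (ν (.yc i j) : ℝ) ≤ 14 * ((i : ℕ) + 1 : ℝ) + 3 * (j : ℕ) + 2 ∧
      (ν (.xc i j) : ℝ) ≤ (ν (.yc i j) : ℝ)) ∧
  (∀ (i i' : Fin m) (j j' : Fin 3), lits i j = lits i' j' →
      (ν (.xc i' j') : ℝ) - ν (.xc i j) = 14 * (((i' : ℕ) : ℝ) - ((i : ℕ) : ℝ)) +
        3 * (((j' : ℕ) : ℝ) - ((j : ℕ) : ℝ)) ∧
      (ν (.yc i' j') : ℝ) - ν (.yc i j) = 14 * (((i' : ℕ) : ℝ) - ((i : ℕ) : ℝ)) +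
        3 * (((j' : ℕ) : ℝ) - ((j : ℕ) : ℝ)))

/-- The (real) value of a state of a configuration. -/
noncomputable def sval (s : XY × Option ℝ≥0) : ℝ := ((s.2.getD 0 : ℝ≥0) : ℝ)

/-- The assignment `α_{γ'}` extracted from a surjection `h'` witnessing that a
configuration satisfies `(Z'_φ, ∅)`: a propositional variable is true iff the
difference `y − x` of (one of) its literal occurrences exceeds 1. -/
def alphaOf {PV : Type*} (lits : Fin m → Fin 3 → PV)
    (h' : MVar m → XY × Option ℝ≥0) (p : PV) : Prop :=
  ∃ (i : Fin m) (j : Fin 3), lits i j = p ∧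
    1 < sval (h' (.yc i j)) - sval (h' (.xc i j))

/-- The assignment `α` falsifies clause `C_i` (clauses `C_1, …, C_k` are
positive, the rest negative): all of its literals are false. -/
def Falsifies {PV : Type*} (k : ℕ) (lits : Fin m → Fin 3 → PV)
    (α : PV → Prop) (i : Fin m) : Prop :=
  if (i : ℕ) < k then ∀ j : Fin 3, ¬ α (lits i j) else ∀ j : Fin 3, α (lits i j)

/-- The monotone 3-CNF formula is satisfiable. -/
def MonoSatisfiable {PV : Type*} (k : ℕ) (lits : Fin m → Fin 3 → PV) : Prop :=
  ∃ α : PV → Prop, ∀ i : Fin m, ¬ Falsifies k lits α i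

end Mono



namespace WQOCore

open List

variable {α : Type*}

def Good (R : Finset (List α)) : Set (List α) := {w | ∀ u ∈ R, ¬ u <+ w}

noncomputable def step (R : Finset (List α)) (c : α) : Finset (List α) :=
  R ∪ ((R.filter (fun u => u.head? = some c)).image List.tail)

lemma mem_step {R : Finset (List α)} {c : α} {v : List α} :
    v ∈ step R c ↔ v ∈ R ∨ c :: v ∈ R := by
  simp only [step, Finset.mem_union, Finset.mem_image, Finset.mem_filter]
  constructor
  · rintro (h | ⟨u, ⟨hu, hh⟩, rfl⟩)
    · exact Or.inl h
    · cases u with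
      | nil => simp at hh
      | cons a t =>
        simp only [head?_cons, Option.some.injEq] at hh
        subst hh; exact Or.inr hu
  · rintro (h | h)
    · exact Or.inl h
    · exact Or.inr ⟨c :: v, ⟨h, rfl⟩, rfl⟩

lemma subset_step (R : Finset (List α)) (c : α) : R ⊆ step R c :=
  Finset.subset_union_left

lemma good_anti {R R' : Finset (List α)} (h : R ⊆ R') : Good R' ⊆ Good R :=
  fun _ hw u hu => hw u (h hu)

lemma good_cons {R : Finset (List α)} {c : α} {w : List α} :
    (c :: w) ∈ Good R ↔ w ∈ Good (step R c) := by
  constructor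
  · intro h v hv hsub
    rcases mem_step.1 hv with h1 | h1
    · exact h v h1 (hsub.trans (sublist_cons_self c w))
    · exact h _ h1 (hsub.cons₂ c)
  · intro h u hu hsub
    rcases sublist_cons_iff.1 hsub with h1 | ⟨t, rfl, ht⟩
    · exact h u (mem_step.2 (Or.inl hu)) h1
    · exact h t (mem_step.2 (Or.inr hu)) ht

def Stay (R : Finset (List α)) : Set α := {c | step R c = R}

lemma good_stay_append {R : Finset (List α)} {x y : List α}
    (hx : ∀ c ∈ x, c ∈ Stay R) : (x ++ y) ∈ Good R ↔ y ∈ Good R := by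
  induction x with
  | nil => simp
  | cons c x ih =>
    have hc : step R c = R := hx c mem_cons_self
    rw [cons_append, good_cons, hc, ih (fun d hd => hx d (mem_cons_of_mem c hd))]

lemma nil_mem_good {R : Finset (List α)} : ([] : List α) ∈ Good R ↔ [] ∉ R := by
  constructor
  · intro h hR; exact h [] hR (Sublist.refl [])
  · intro h u hu hsub
    rw [sublist_nil] at hsub
    exact h (hsub ▸ hu)

lemma exists_head_of_step_ne {R : Finset (List α)} {c : α} (h : step R c ≠ R) :
    ∃ v, c :: v ∈ R := by
  by_contra hno
  push_neg at hno
  apply h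
  apply Finset.Subset.antisymm _ (subset_step R c)
  intro v hv
  rcases mem_step.1 hv with h1 | h1
  · exact h1
  · exact absurd h1 (hno v)

/-! products -/

def LP : List (α ⊕ Set α) → List α → Prop
  | [], w => w = []
  | (Sum.inl a) :: P, w => LP P w ∨ ∃ w', w = a :: w' ∧ LP P w'
  | (Sum.inr B) :: P, w => ∃ x y, w = x ++ y ∧ (∀ c ∈ x, c ∈ B) ∧ LP P y

lemma LP_mono : ∀ {P P' : List (α ⊕ Set α)}, P <+ P' → ∀ {w}, LP P w → LP P' w := by
  intro P P' h
  induction h with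
  | slnil => intro w hw; exact hw
  | cons a _ ih =>
    intro w hw
    cases a with
    | inl a => exact Or.inl (ih hw)
    | inr B => exact ⟨[], w, rfl, by simp, ih hw⟩
  | cons_cons a _ ih =>
    intro w hw
    cases a with
    | inl a =>
      rcases hw with hw | ⟨w', rfl, hw⟩
      · exact Or.inl (ih hw)
      · exact Or.inr ⟨w', rfl, ih hw⟩
    | inr B =>
      obtain ⟨x, y, rfl, hx, hy⟩ := hw
      exact ⟨x, y, rfl, hx, ih hy⟩

lemma LP_star_cons {B : Set α} {P : List (α ⊕ Set α)} {c : α} {y : List α}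
    (hc : c ∈ B) (h : LP (Sum.inr B :: P) y) : LP (Sum.inr B :: P) (c :: y) := by
  obtain ⟨x, z, rfl, hx, hz⟩ := h
  exact ⟨c :: x, z, rfl, fun d hd => (mem_cons.1 hd).elim (fun h => h ▸ hc) (hx d), hz⟩

def heads : List α → Finset α
  | [] => ∅
  | a :: _ => {a}

noncomputable def ProdsF : ℕ → Finset (List α) → List (List (α ⊕ Set α))
  | 0, _ => []
  | (f+1), R =>
    if ([] : List α) ∈ R then []
    else [Sum.inr (Stay R)] ::
      ((R.biUnion heads).toList.flatMap fun c =>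
        if step R c = R then []
        else (ProdsF f (step R c)).map fun P => Sum.inr (Stay R) :: Sum.inl c :: P)

lemma prodsF_sound : ∀ (f : ℕ) (R : Finset (List α)) (P : List (α ⊕ Set α)) (w : List α),
    P ∈ ProdsF f R → LP P w → w ∈ Good R := by
  intro f
  induction f with
  | zero => intro R P w hP; simp [ProdsF] at hP
  | succ f ih =>
    intro R P w hP hw
    rw [ProdsF] at hP
    by_cases hR : ([] : List α) ∈ R
    · simp [hR] at hP
    · rw [if_neg hR] at hP
      rcases mem_cons.1 hP with rfl | hP
      · obtain ⟨x, y, rfl, hx, hy⟩ := hw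
        have hy' : y = [] := hy
        subst hy'
        exact (good_stay_append hx).2 (nil_mem_good.2 hR)
      · obtain ⟨c, _, hP⟩ := mem_flatMap.1 hP
        by_cases hstep : step R c = R
        · simp [hstep] at hP
        · rw [if_neg hstep] at hP
          obtain ⟨P₀, hP₀, rfl⟩ := mem_map.1 hP
          obtain ⟨x, y, rfl, hx, hy⟩ := hw
          rw [good_stay_append hx]
          rcases hy with hy | ⟨y', rfl, hy⟩
          · exact good_anti (subset_step R c) (ih (step R c) P₀ y hP₀ hy)
          · exact good_cons.2 (ih (step R c) P₀ y' hP₀ hy)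

noncomputable def SC (R : Finset (List α)) : Finset (List α) :=
  R.biUnion fun u => u.tails.toFinset

lemma mem_SC {R : Finset (List α)} {v : List α} : v ∈ SC R ↔ ∃ u ∈ R, v <:+ u := by
  simp [SC, mem_tails]

lemma subset_SC (R : Finset (List α)) : R ⊆ SC R :=
  fun u hu => mem_SC.2 ⟨u, hu, suffix_refl u⟩

lemma step_subset_SC (R : Finset (List α)) (c : α) : step R c ⊆ SC R := by
  intro v hv
  rcases mem_step.1 hv with h | h
  · exact subset_SC R h
  · exact mem_SC.2 ⟨c :: v, h, ⟨[c], rfl⟩⟩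

lemma SC_step_subset (R : Finset (List α)) (c : α) : SC (step R c) ⊆ SC R := by
  intro t ht
  obtain ⟨v, hv, hsuf⟩ := mem_SC.1 ht
  rcases mem_step.1 hv with h | h
  · exact mem_SC.2 ⟨v, h, hsuf⟩
  · exact mem_SC.2 ⟨c :: v, h, hsuf.trans ⟨[c], rfl⟩⟩

noncomputable def meas (R : Finset (List α)) : ℕ := (SC R).card - R.card

lemma meas_lt {R : Finset (List α)} {c : α} (h : step R c ≠ R) :
    meas (step R c) < meas R := by
  have h1 : R ⊂ step R c := (Finset.ssubset_iff_subset_ne.2 ⟨subset_step R c, Ne.symm h⟩)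
  have h2 : R.card < (step R c).card := Finset.card_lt_card h1
  have h3 : (SC (step R c)).card ≤ (SC R).card := Finset.card_le_card (SC_step_subset R c)
  have h4 : (step R c).card ≤ (SC (step R c)).card := Finset.card_le_card (subset_SC _)
  have h5 : (step R c).card ≤ (SC R).card := Finset.card_le_card (step_subset_SC R c)
  unfold meas
  omega

lemma prodsF_cover : ∀ (f : ℕ) (R : Finset (List α)), meas R < f →
    ∀ w ∈ Good R, ∃ P ∈ ProdsF f R, LP P w := by
  intro f
  induction f with
  | zero => intro R h; exact absurd h (Nat.not_lt_zero _)
  | succ f ih =>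
    intro R hm w
    induction w with
    | nil =>
      intro hw
      have hR : ([] : List α) ∉ R := fun h => hw [] h (nil_sublist [])
      refine ⟨[Sum.inr (Stay R)], ?_, ⟨[], [], rfl, by simp, rfl⟩⟩
      rw [ProdsF, if_neg hR]
      exact mem_cons_self
    | cons c w' ihw =>
      intro hw
      have hR : ([] : List α) ∉ R := fun h => hw [] h (nil_sublist _)
      by_cases hc : step R c = R
      · have hw' : w' ∈ Good R := by
          have := good_cons.1 hw; rwa [hc] at this
        obtain ⟨P, hP, hLP⟩ := ihw hw'
        have hshape : ∃ P₁, P = Sum.inr (Stay R) :: P₁ := by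
          rw [ProdsF, if_neg hR] at hP
          rcases mem_cons.1 hP with rfl | hP
          · exact ⟨[], rfl⟩
          · obtain ⟨d, _, hP⟩ := mem_flatMap.1 hP
            by_cases hd : step R d = R
            · simp [hd] at hP
            · rw [if_neg hd] at hP
              obtain ⟨P₀, _, rfl⟩ := mem_map.1 hP
              exact ⟨_, rfl⟩
        obtain ⟨P₁, rfl⟩ := hshape
        exact ⟨_, hP, LP_star_cons hc hLP⟩
      · have hw' : w' ∈ Good (step R c) := good_cons.1 hw
        have hm' : meas (step R c) < f :=
          lt_of_lt_of_le (meas_lt hc) (Nat.lt_succ_iff.1 hm)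
        obtain ⟨P₀, hP₀, hLP⟩ := ih (step R c) hm' w' hw'
        refine ⟨Sum.inr (Stay R) :: Sum.inl c :: P₀, ?_,
          ⟨[], c :: w', rfl, by simp, Or.inr ⟨w', rfl, hLP⟩⟩⟩
        rw [ProdsF, if_neg hR]
        refine mem_cons_of_mem _ (mem_flatMap.2 ⟨c, ?_, ?_⟩)
        · obtain ⟨v, hv⟩ := exists_head_of_step_ne hc
          rw [Finset.mem_toList]
          exact Finset.mem_biUnion.2 ⟨c :: v, hv, by simp [heads]⟩
        · rw [if_neg hc]
          exact mem_map_of_mem hP₀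

def Letters (R : Finset (List α)) : Set α := {c | ∃ u ∈ R, c ∈ u}

lemma letters_step {R : Finset (List α)} {c : α} :
    Letters (step R c) ⊆ Letters R := by
  rintro d ⟨u, hu, hd⟩
  rcases mem_step.1 hu with h | h
  · exact ⟨u, h, hd⟩
  · exact ⟨c :: u, h, mem_cons_of_mem c hd⟩

lemma mem_of_mem_heads {c : α} {u : List α} (h : c ∈ heads u) : c ∈ u := by
  cases u with
  | nil => simp [heads] at h
  | cons a t =>
    simp only [heads, Finset.mem_singleton] at h
    exact h ▸ mem_cons_self

lemma prodsF_atoms (L0 : Set α) :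
    ∀ (f : ℕ) (R : Finset (List α)), Letters R ⊆ L0 →
    ∀ P ∈ ProdsF f R, ∀ x ∈ P,
      x ∈ (Sum.inl '' L0 ∪ Sum.inr '' ((fun C : Set α => Cᶜ) '' {C | C ⊆ L0}) :
        Set (α ⊕ Set α)) := by
  intro f
  induction f with
  | zero => intro R _ P hP; simp [ProdsF] at hP
  | succ f ih =>
    intro R hL P hP x hx
    have hstay : (Sum.inr (Stay R) : α ⊕ Set α) ∈
        (Sum.inl '' L0 ∪ Sum.inr '' ((fun C : Set α => Cᶜ) '' {C | C ⊆ L0}) :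
          Set (α ⊕ Set α)) := by
      refine Or.inr ⟨Stay R, ⟨(Stay R)ᶜ, ?_, compl_compl _⟩, rfl⟩
      intro d hd
      obtain ⟨v, hv⟩ := exists_head_of_step_ne hd
      exact hL ⟨d :: v, hv, mem_cons_self⟩
    rw [ProdsF] at hP
    by_cases hR : ([] : List α) ∈ R
    · simp [hR] at hP
    · rw [if_neg hR] at hP
      rcases mem_cons.1 hP with rfl | hP
      · rcases mem_singleton.1 hx with rfl
        exact hstay
      · obtain ⟨c, hc, hP⟩ := mem_flatMap.1 hP
        by_cases hstep : step R c = R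
        · simp [hstep] at hP
        · rw [if_neg hstep] at hP
          obtain ⟨P₀, hP₀, rfl⟩ := mem_map.1 hP
          have hcL : c ∈ L0 := by
            rw [Finset.mem_toList] at hc
            obtain ⟨u, hu, hcu⟩ := Finset.mem_biUnion.1 hc
            exact hL ⟨u, hu, mem_of_mem_heads hcu⟩
          rcases mem_cons.1 hx with rfl | hx
          · exact hstay
          · rcases mem_cons.1 hx with rfl | hx
            · exact Or.inl ⟨c, hcL, rfl⟩
            · exact ih (step R c) (fun d hd => hL (letters_step hd)) P₀ hP₀ x hx

lemma sf2_exists {β : Type*} {r : β → β → Prop} :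
    ∀ {l l' : List β}, SublistForall₂ r l l' → ∀ a ∈ l, ∃ b ∈ l', r a b := by
  intro l l' h
  induction h with
  | nil => intro a ha; exact absurd ha not_mem_nil
  | @cons a b l₁ l₂ hab _ ih =>
    intro x hx
    rcases mem_cons.1 hx with rfl | hx
    · exact ⟨b, mem_cons_self, hab⟩
    · obtain ⟨y, hy, hxy⟩ := ih x hx
      exact ⟨y, mem_cons_of_mem b hy, hxy⟩
  | @cons_right b l₁ l₂ _ ih =>
    intro x hx
    obtain ⟨y, hy, hxy⟩ := ih x hx
    exact ⟨y, mem_cons_of_mem b hy, hxy⟩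

lemma sf2_eq_sublist {β : Type*} {l l' : List β}
    (h : SublistForall₂ (fun x y => x = y) l l') : l <+ l' := by
  obtain ⟨l'', h1, h2⟩ := sublistForall₂_iff.1 h
  have : l = l'' := by
    rw [forall₂_eq_eq_eq] at h1
    exact h1
  exact this ▸ h2

lemma finite_pwo_eq {β : Type*} {s : Set β} (hs : s.Finite) :
    s.PartiallyWellOrderedOn (fun x y => x = y) := by
  rw [Set.partiallyWellOrderedOn_iff_exists_lt]
  intro f hf
  haveI : Finite s := hs.to_subtype
  have : ¬ Function.Injective (fun n : ℕ => (⟨f n, hf n⟩ : s)) := by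
    intro hinj
    exact (Finite.false (Finite.of_injective _ hinj))
  rw [Function.not_injective_iff] at this
  obtain ⟨i, j, hval, hne⟩ := this
  rcases lt_or_gt_of_ne hne with h | h
  · exact ⟨i, j, h, congrArg Subtype.val hval⟩
  · exact ⟨j, i, h, (congrArg Subtype.val hval).symm⟩

theorem smyth_words {α : Type*} (L0 : Set α) (hL0 : L0.Finite) (F : ℕ → Finset (List α))
    (hlet : ∀ n, ∀ w ∈ F n, ∀ c ∈ w, c ∈ L0) :
    ∃ i j, i < j ∧ ∀ w' ∈ F j, ∃ w ∈ F i, w <+ w' := by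
  classical
  set A0 : Set (α ⊕ Set α) :=
    Sum.inl '' L0 ∪ Sum.inr '' ((fun C : Set α => Cᶜ) '' {C | C ⊆ L0}) with hA0def
  have hA0 : A0.Finite :=
    (hL0.image _).union (((hL0.finite_subsets).image _).image _)
  haveI h1 : IsRefl (α ⊕ Set α) (fun x y => x = y) := ⟨fun _ => rfl⟩
  haveI h2 : IsTrans (α ⊕ Set α) (fun x y => x = y) := ⟨fun _ _ _ h h' => h.trans h'⟩
  have p0 : A0.PartiallyWellOrderedOn (fun x y => x = y) := finite_pwo_eq hA0
  have p1 := p0.partiallyWellOrderedOn_sublistForall₂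
  haveI h3 : IsRefl (List (α ⊕ Set α)) (SublistForall₂ (fun x y => x = y)) :=
    ⟨fun l => sublistForall₂_iff.2 ⟨l, by rw [forall₂_eq_eq_eq], Sublist.refl l⟩⟩
  haveI h4 : IsTrans (List (α ⊕ Set α)) (SublistForall₂ (fun x y => x = y)) := by
    constructor
    intro a b c hab hbc
    have h1 := sf2_eq_sublist hab
    have h2 := sf2_eq_sublist hbc
    exact sublistForall₂_iff.2 ⟨a, by rw [forall₂_eq_eq_eq], h1.trans h2⟩
  haveI h5 : IsPreorder (List (α ⊕ Set α)) (SublistForall₂ (fun x y => x = y)) :=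
    { refl := fun a => h3.refl a, trans := fun a b c => h4.trans a b c }
  have p2 := p1.partiallyWellOrderedOn_sublistForall₂
  set seq : ℕ → List (List (α ⊕ Set α)) := fun n => ProdsF (meas (F n) + 1) (F n) with hseq
  have hmem : ∀ n, seq n ∈ {l | ∀ x ∈ l, x ∈ {l | ∀ x ∈ l, x ∈ A0}} := by
    intro n P hP
    exact fun x hx => prodsF_atoms L0 _ (F n)
      (fun c hc => by obtain ⟨u, hu, hcu⟩ := hc; exact hlet n u hu c hcu) P hP x hx
  obtain ⟨i, j, hij, hrel⟩ := p2.exists_lt hmem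
  refine ⟨i, j, hij, ?_⟩
  intro w' hw'
  by_contra hno
  push_neg at hno
  have hwG : w' ∈ Good (F i) := fun u hu hsub => hno u hu hsub
  obtain ⟨P, hP, hLP⟩ := prodsF_cover _ (F i) (Nat.lt_succ_self _) w' hwG
  obtain ⟨P', hP', hPP'⟩ := sf2_exists hrel P hP
  have hsub : P <+ P' := sf2_eq_sublist hPP'
  exact prodsF_sound _ (F j) P' w' hP' (LP_mono hsub hLP) w' hw' (Sublist.refl w')

end WQOCore

namespace RegionPart

open List

variable {Q : Type*}

noncomputable def stVal (s : Q × Option ℝ≥0) : ℝ≥0 := s.2.getD 0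
noncomputable def stFloor (s : Q × Option ℝ≥0) : ℤ := ⌊(stVal s : ℝ)⌋
noncomputable def stFract (s : Q × Option ℝ≥0) : ℝ := Int.fract (stVal s : ℝ)

def isSmallSt (M : ℕ) (s : Q × Option ℝ≥0) : Prop :=
  ∃ r : ℝ≥0, s.2 = some r ∧ r ≤ (M : ℝ≥0) ∧ Int.fract (r : ℝ) = 0
def isFrSt (M : ℕ) (s : Q × Option ℝ≥0) : Prop :=
  ∃ r : ℝ≥0, s.2 = some r ∧ r ≤ (M : ℝ≥0) ∧ Int.fract (r : ℝ) ≠ 0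
def isBigSt (M : ℕ) (s : Q × Option ℝ≥0) : Prop :=
  ∃ r : ℝ≥0, s.2 = some r ∧ ¬ r ≤ (M : ℝ≥0)

abbrev AlphaT (Q : Type*) := (Finset (Q × ℤ) × Finset Q) ⊕ (Finset (Q × ℤ) ⊕ Q)

noncomputable def smallLetter (M : ℕ) (γ : Config Q) : Finset (Q × ℤ) :=
  (γ.filter (isSmallSt M)).image fun s => (s.1, stFloor s)
noncomputable def noneLocs (γ : Config Q) : Finset Q :=
  (γ.filter (fun s => s.2 = none)).image Prod.fst
noncomputable def frFinset (M : ℕ) (γ : Config Q) : Finset ℝ :=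
  (γ.filter (isFrSt M)).image stFract
noncomputable def classAt (M : ℕ) (γ : Config Q) (f : ℝ) : Finset (Q × ℤ) :=
  (γ.filter (fun s => isFrSt M s ∧ stFract s = f)).image fun s => (s.1, stFloor s)
noncomputable def bigCnt (M : ℕ) (γ : Config Q) (q : Q) : ℕ :=
  (γ.filter (fun s => s.1 = q ∧ isBigSt M s)).card

/-! ### value facts -/

lemma stVal_some {s : Q × Option ℝ≥0} {r : ℝ≥0} (h : s.2 = some r) : stVal s = r := by
  unfold stVal
  rw [h]
  rfl

lemma val_eq_floor_add_fract (s : Q × Option ℝ≥0) :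
    ((stVal s : ℝ)) = (stFloor s : ℝ) + stFract s := (Int.floor_add_fract _).symm

lemma isSmallSt_val {M : ℕ} {s : Q × Option ℝ≥0} (h : isSmallSt M s) :
    s.2 = some (stVal s) ∧ stVal s ≤ (M : ℝ≥0) ∧ stFract s = 0 := by
  obtain ⟨r, h1, h2, h3⟩ := h
  have hv := stVal_some h1
  exact ⟨by rw [hv]; exact h1, by rw [hv]; exact h2, by rw [stFract, hv]; exact h3⟩

lemma isFrSt_val {M : ℕ} {s : Q × Option ℝ≥0} (h : isFrSt M s) :
    s.2 = some (stVal s) ∧ stVal s ≤ (M : ℝ≥0) ∧ stFract s ≠ 0 := by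
  obtain ⟨r, h1, h2, h3⟩ := h
  have hv := stVal_some h1
  exact ⟨by rw [hv]; exact h1, by rw [hv]; exact h2, by rw [stFract, hv]; exact h3⟩

lemma isBigSt_val {M : ℕ} {s : Q × Option ℝ≥0} (h : isBigSt M s) :
    s.2 = some (stVal s) ∧ ¬ stVal s ≤ (M : ℝ≥0) := by
  obtain ⟨r, h1, h2⟩ := h
  have hv := stVal_some h1
  exact ⟨by rw [hv]; exact h1, by rw [hv]; exact h2⟩

lemma state_eq_of {s t : Q × Option ℝ≥0} (h1 : s.1 = t.1)
    (hs : s.2 = some (stVal s)) (ht : t.2 = some (stVal t))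
    (h2 : stFloor s = stFloor t) (h3 : stFract s = stFract t) : s = t := by
  refine Prod.ext h1 ?_
  rw [hs, ht]
  congr 1
  apply NNReal.coe_injective
  rw [val_eq_floor_add_fract, val_eq_floor_add_fract, h2, h3]

lemma state_classify (M : ℕ) (s : Q × Option ℝ≥0) :
    s.2 = none ∨ isSmallSt M s ∨ isFrSt M s ∨ isBigSt M s := by
  rcases h : s.2 with _ | r
  · exact Or.inl rfl
  · by_cases hM : r ≤ (M : ℝ≥0)
    · by_cases hf : Int.fract (r : ℝ) = 0
      · exact Or.inr (Or.inl ⟨r, h, hM, hf⟩)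
      · exact Or.inr (Or.inr (Or.inl ⟨r, h, hM, hf⟩))
    · exact Or.inr (Or.inr (Or.inr ⟨r, h, hM⟩))

lemma frFinset_pos {M : ℕ} {γ : Config Q} {f : ℝ} (hf : f ∈ frFinset M γ) : 0 < f := by
  obtain ⟨s, hs, rfl⟩ := Finset.mem_image.1 hf
  have h := (Finset.mem_filter.1 hs).2
  have h3 := (isFrSt_val h).2.2
  exact lt_of_le_of_ne (Int.fract_nonneg _) (Ne.symm h3)

lemma mem_frFinset {M : ℕ} {γ : Config Q} {s : Q × Option ℝ≥0}
    (hs : s ∈ γ) (h : isFrSt M s) : stFract s ∈ frFinset M γ :=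
  Finset.mem_image.2 ⟨s, Finset.mem_filter.2 ⟨hs, h⟩, rfl⟩

lemma mem_classAt {M : ℕ} {γ : Config Q} {s : Q × Option ℝ≥0}
    (hs : s ∈ γ) (h : isFrSt M s) : (s.1, stFloor s) ∈ classAt M γ (stFract s) :=
  Finset.mem_image.2 ⟨s, Finset.mem_filter.2 ⟨hs, ⟨h, rfl⟩⟩, rfl⟩


variable [Fintype Q]

noncomputable def wordOf (M : ℕ) (γ : Config Q) : List (AlphaT Q) :=
  Sum.inl (smallLetter M γ, noneLocs γ) ::
    ((((frFinset M γ).sort (· ≤ ·)).map fun f => Sum.inr (Sum.inl (classAt M γ f))) ++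
      (Finset.univ.toList.flatMap fun q =>
        List.replicate (bigCnt M γ q) (Sum.inr (Sum.inr (q : Q)))))

/-! ### extraction lemmas -/

lemma filter_left_word (M : ℕ) (γ : Config Q) :
    (wordOf M γ).filter (fun x => x.isLeft) =
      [Sum.inl (smallLetter M γ, noneLocs γ)] := by
  rw [wordOf, filter_cons_of_pos (by simp), filter_eq_nil_iff.2]
  intro x hx
  rcases mem_append.1 hx with hx | hx
  · obtain ⟨f, _, rfl⟩ := mem_map.1 hx
    simp
  · obtain ⟨q, _, hx⟩ := mem_flatMap.1 hx
    rw [eq_of_mem_replicate hx]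
    simp

lemma singleton_sublist_singleton {β : Type*} {a b : β} (h : [a] <+ [b]) : a = b := by
  cases h with
  | cons _ h' => rw [sublist_nil] at h'; simp at h'
  | cons_cons => rfl

def isClassLetter : AlphaT Q → Bool := fun x =>
  match x with
  | Sum.inr (Sum.inl _) => true
  | _ => false

lemma filter_class_word (M : ℕ) (γ : Config Q) :
    (wordOf M γ).filter isClassLetter =
      ((frFinset M γ).sort (· ≤ ·)).map fun f => Sum.inr (Sum.inl (classAt M γ f)) := by
  rw [wordOf, filter_cons_of_neg (by simp [isClassLetter]), filter_append,
    filter_eq_self.2, filter_eq_nil_iff.2, append_nil]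
  · intro x hx
    obtain ⟨q, _, hx⟩ := mem_flatMap.1 hx
    rw [eq_of_mem_replicate hx]
    simp [isClassLetter]
  · intro x hx
    obtain ⟨f, _, rfl⟩ := mem_map.1 hx
    simp [isClassLetter]

noncomputable def qLetter (q : Q) : AlphaT Q → Bool := fun x =>
  match x with
  | Sum.inr (Sum.inr q') => decide (q' = q)
  | _ => false

lemma countP_qLetter_replicate (q q' : Q) (n : ℕ) (x : AlphaT Q) :
    (List.replicate n x).countP (qLetter q) = if qLetter q x then n else 0 := by
  induction n with
  | zero => simp
  | succ n ih =>
    rw [replicate_succ, countP_cons, ih]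
    by_cases h : qLetter q x <;> simp [h]

lemma countP_big_flatMap (M : ℕ) (γ : Config Q) (q : Q) :
    ∀ l : List Q, l.Nodup → q ∈ l →
      (l.flatMap fun q' =>
        List.replicate (bigCnt M γ q') (Sum.inr (Sum.inr q') : AlphaT Q)).countP (qLetter q)
        = bigCnt M γ q := by
  intro l
  induction l with
  | nil => intro _ h; exact absurd h not_mem_nil
  | cons a t ih =>
    intro hnd hq
    rw [flatMap_cons, countP_append, countP_qLetter_replicate q a _ _]
    by_cases ha : a = q
    · have hqt : q ∉ t := ha ▸ (nodup_cons.1 hnd).1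
      have hz : (t.flatMap fun q' =>
          List.replicate (bigCnt M γ q') (Sum.inr (Sum.inr q') : AlphaT Q)).countP
            (qLetter q) = 0 := by
        rw [countP_eq_zero]
        intro x hx
        obtain ⟨q', hq', hx⟩ := mem_flatMap.1 hx
        rw [eq_of_mem_replicate hx]
        simp only [qLetter, decide_eq_true_eq]
        intro h
        rw [show q' = q from by simpa using h] at hq'
        exact hqt hq'
      rw [hz, add_zero, if_pos (by simp [qLetter, ha]), ha]
    · rw [if_neg (by simp [qLetter, ha]), zero_add]
      exact ih (nodup_cons.1 hnd).2 ((mem_cons.1 hq).resolve_left (fun h => ha h.symm))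

lemma countP_big_word (M : ℕ) (γ : Config Q) (q : Q) :
    (wordOf M γ).countP (qLetter q) = bigCnt M γ q := by
  rw [wordOf, countP_cons_of_neg (by simp [qLetter]), countP_append]
  have h1 : ((((frFinset M γ).sort (· ≤ ·)).map
      fun f => (Sum.inr (Sum.inl (classAt M γ f)) : AlphaT Q)).countP (qLetter q)) = 0 := by
    rw [countP_eq_zero]
    intro x hx
    obtain ⟨f, _, rfl⟩ := mem_map.1 hx
    simp [qLetter]
  rw [h1, zero_add]
  exact countP_big_flatMap M γ q _ (Finset.nodup_toList _) (by simp)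


/-! ### the main construction -/

theorem cfgEntails_of_word_sublist (M : ℕ) (γ γ' : Config Q)
    (hw : wordOf M γ <+ wordOf M γ') :
    ∃ γ'' ⊆ γ', ∃ F : (Q × Option ℝ≥0) → (Q × Option ℝ≥0),
      Set.BijOn F ↑γ ↑γ'' ∧
      (∀ s ∈ γ, (F s).1 = s.1) ∧
      (∀ s ∈ γ, ((F s).2 = none ↔ s.2 = none)) ∧
      (∀ s ∈ γ, ∀ r r', s.2 = some r → (F s).2 = some r' →
        ((r ≤ (M : ℝ≥0)) ↔ (r' ≤ (M : ℝ≥0))) ∧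
        (r ≤ (M : ℝ≥0) →
          (⌊(r : ℝ)⌋ = ⌊(r' : ℝ)⌋ ∧ (Int.fract (r : ℝ) = 0 ↔ Int.fract (r' : ℝ) = 0)))) ∧
      (∀ s₁ ∈ γ, ∀ s₂ ∈ γ, ∀ r₁ r₂ r₁' r₂',
        s₁.2 = some r₁ → s₂.2 = some r₂ → (F s₁).2 = some r₁' → (F s₂).2 = some r₂' →
        r₁ ≤ (M : ℝ≥0) → r₂ ≤ (M : ℝ≥0) →
        (Int.fract (r₁ : ℝ) ≤ Int.fract (r₂ : ℝ) ↔
          Int.fract (r₁' : ℝ) ≤ Int.fract (r₂' : ℝ))) := by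
  classical
  -- head letter: small states and none-locations coincide
  have hhead := hw.filter (fun x => x.isLeft)
  rw [filter_left_word, filter_left_word] at hhead
  have hheadeq := Sum.inl.inj (singleton_sublist_singleton hhead)
  have hsm : smallLetter M γ = smallLetter M γ' := congrArg Prod.fst hheadeq
  have hnl : noneLocs γ = noneLocs γ' := congrArg Prod.snd hheadeq
  -- class letters
  set L : List ℝ := (frFinset M γ).sort (· ≤ ·) with hLdef
  set L' : List ℝ := (frFinset M γ').sort (· ≤ ·) with hL'def
  have hcl : (L.map fun f => (Sum.inr (Sum.inl (classAt M γ f)) : AlphaT Q))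
      <+ (L'.map fun f => (Sum.inr (Sum.inl (classAt M γ' f)) : AlphaT Q)) := by
    have h := hw.filter isClassLetter
    rwa [filter_class_word, filter_class_word] at h
  obtain ⟨is, hiseq, hispw⟩ := sublist_eq_map_getElem hcl
  have hlen : L.length = is.length := by
    have := congrArg length hiseq
    simpa using this
  -- the index map
  have hgetlt : ∀ (k : ℕ) (h : k < is.length), ((is.get ⟨k, h⟩ : Fin _) : ℕ) < L'.length := by
    intro k h
    have := (is.get ⟨k, h⟩).2
    simpa using this
  have hpoint : ∀ (k : ℕ) (hk' : k < is.length),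
      classAt M γ (L.get ⟨k, hlen ▸ hk'⟩) =
        classAt M γ' (L'.get ⟨((is.get ⟨k, hk'⟩ : Fin _) : ℕ), hgetlt k hk'⟩) := by
    intro k hk'
    have hk2 : k < (L.map fun f => (Sum.inr (Sum.inl (classAt M γ f)) : AlphaT Q)).length := by
      rw [length_map]
      exact hlen ▸ hk'
    have h1 := List.get_of_eq hiseq ⟨k, hk2⟩
    simp only [List.get_eq_getElem, List.getElem_map, Fin.getElem_fin] at h1
    exact Sum.inl.inj (Sum.inr.inj h1)
  -- sorted facts
  have hLs : L.SortedLT := Finset.sortedLT_sort _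
  have hL's : L'.SortedLT := Finset.sortedLT_sort _
  -- the fract transport map
  have hidx : ∀ f ∈ frFinset M γ, L.idxOf f < is.length := fun f hf =>
    hlen ▸ List.idxOf_lt_length_iff.2 ((Finset.mem_sort (α := ℝ) (· ≤ ·)).2 hf)
  set φ : ℝ → ℝ := fun f => if h : L.idxOf f < is.length
      then L'.get ⟨((is.get ⟨L.idxOf f, h⟩ : Fin _) : ℕ), hgetlt _ h⟩ else 0 with hφdef
  have hφval : ∀ (f : ℝ) (h : L.idxOf f < is.length),
      φ f = L'.get ⟨((is.get ⟨L.idxOf f, h⟩ : Fin _) : ℕ), hgetlt _ h⟩ := by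
    intro f h
    simp only [hφdef, dif_pos h]
  have hφmem : ∀ f ∈ frFinset M γ, φ f ∈ frFinset M γ' := by
    intro f hf
    rw [hφval f (hidx f hf)]
    exact (Finset.mem_sort (α := ℝ) (· ≤ ·)).1 (List.get_mem _ _)
  have hφclass : ∀ f ∈ frFinset M γ, classAt M γ f = classAt M γ' (φ f) := by
    intro f hf
    have h := hidx f hf
    rw [hφval f h]
    have h2 := hpoint (L.idxOf f) h
    rwa [List.idxOf_get (hlen ▸ h)] at h2
  have hφlt : ∀ f1 ∈ frFinset M γ, ∀ f2 ∈ frFinset M γ, f1 < f2 → φ f1 < φ f2 := by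
    intro f1 hf1 f2 hf2 h12
    have h1 := hidx f1 hf1
    have h2 := hidx f2 hf2
    have hgl : L.get ⟨L.idxOf f1, hlen ▸ h1⟩ < L.get ⟨L.idxOf f2, hlen ▸ h2⟩ := by
      rw [List.idxOf_get (hlen ▸ h1), List.idxOf_get (hlen ▸ h2)]
      exact h12
    have hio : (⟨L.idxOf f1, hlen ▸ h1⟩ : Fin L.length) < ⟨L.idxOf f2, hlen ▸ h2⟩ :=
      (hLs.strictMono_get).lt_iff_lt.1 hgl
    have hio' : (⟨L.idxOf f1, h1⟩ : Fin is.length) < ⟨L.idxOf f2, h2⟩ := hio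
    have hpair := (List.pairwise_iff_get.1 hispw) _ _ hio'
    rw [hφval f1 h1, hφval f2 h2]
    exact hL's.strictMono_get (show (⟨_, hgetlt _ h1⟩ : Fin L'.length) < ⟨_, hgetlt _ h2⟩
      from hpair)
  have hφinj : ∀ f1 ∈ frFinset M γ, ∀ f2 ∈ frFinset M γ, φ f1 = φ f2 → f1 = f2 := by
    intro f1 hf1 f2 hf2 h
    rcases lt_trichotomy f1 f2 with hc | hc | hc
    · exact absurd h (ne_of_lt (hφlt f1 hf1 f2 hf2 hc))
    · exact hc
    · exact absurd h.symm (ne_of_lt (hφlt f2 hf2 f1 hf1 hc))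
  have hφle : ∀ f1 ∈ frFinset M γ, ∀ f2 ∈ frFinset M γ, (f1 ≤ f2 ↔ φ f1 ≤ φ f2) := by
    intro f1 hf1 f2 hf2
    constructor
    · intro h
      rcases eq_or_lt_of_le h with h | h
      · rw [h]
      · exact le_of_lt (hφlt f1 hf1 f2 hf2 h)
    · intro h
      by_contra hcon
      push_neg at hcon
      exact absurd h (not_le.2 (hφlt f2 hf2 f1 hf1 hcon))
  -- none states
  have hNone : ∀ s ∈ γ, s.2 = none → s ∈ γ' := by
    intro s hs h2
    have hmem : s.1 ∈ noneLocs γ :=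
      Finset.mem_image.2 ⟨s, Finset.mem_filter.2 ⟨hs, h2⟩, rfl⟩
    rw [hnl] at hmem
    obtain ⟨t, ht, h1⟩ := Finset.mem_image.1 hmem
    have ht1 := (Finset.mem_filter.1 ht).1
    have ht2 := (Finset.mem_filter.1 ht).2
    have : t = s := Prod.ext h1 (by rw [ht2, h2])
    exact this ▸ ht1
  -- small states
  have hSmall : ∀ s ∈ γ, isSmallSt M s → s ∈ γ' := by
    intro s hs h
    have hmem : (s.1, stFloor s) ∈ smallLetter M γ :=
      Finset.mem_image.2 ⟨s, Finset.mem_filter.2 ⟨hs, h⟩, rfl⟩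
    rw [hsm] at hmem
    obtain ⟨t, ht, h1⟩ := Finset.mem_image.1 hmem
    have ht1 := (Finset.mem_filter.1 ht).1
    have ht2 := (Finset.mem_filter.1 ht).2
    have heq : t = s := by
      apply state_eq_of (Prod.ext_iff.1 h1).1
        (isSmallSt_val ht2).1 (isSmallSt_val h).1
        (Prod.ext_iff.1 h1).2
        (by rw [(isSmallSt_val ht2).2.2, (isSmallSt_val h).2.2])
    exact heq ▸ ht1
  -- fractional states
  have hFrKey : ∀ s, s ∈ γ → isFrSt M s → ∃ t, t ∈ γ' ∧ isFrSt M t ∧ t.1 = s.1 ∧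
      stFloor t = stFloor s ∧ stFract t = φ (stFract s) := by
    intro s hs h
    have hf := mem_frFinset hs h
    have hmem := mem_classAt hs h
    rw [hφclass _ hf] at hmem
    obtain ⟨t, ht, h1⟩ := Finset.mem_image.1 hmem
    have ht1 := (Finset.mem_filter.1 ht).1
    have ht2 := (Finset.mem_filter.1 ht).2
    exact ⟨t, ht1, ht2.1, (Prod.ext_iff.1 h1).1, (Prod.ext_iff.1 h1).2, ht2.2⟩
  -- big states
  set Bq : Q → Config Q := fun q => γ.filter (fun s => s.1 = q ∧ isBigSt M s) with hBqdef
  set Bq' : Q → Config Q := fun q => γ'.filter (fun s => s.1 = q ∧ isBigSt M s) with hBq'def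
  have hcard : ∀ q, (Bq q).card ≤ (Bq' q).card := by
    intro q
    have := hw.countP_le (p := qLetter q)
    rwa [countP_big_word, countP_big_word] at this
  set emb : ∀ q, ↥(Bq q) ↪ ↥(Bq' q) := fun q =>
    ((Bq q).equivFin.toEmbedding.trans ((Fin.castLEEmb (hcard q)).trans
      (Bq' q).equivFin.symm.toEmbedding)) with hembdef
  set bigMap : (Q × Option ℝ≥0) → (Q × Option ℝ≥0) := fun s =>
    if h : s ∈ Bq s.1 then ((emb s.1 ⟨s, h⟩ : ↥(Bq' s.1)) : Q × Option ℝ≥0) else s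
    with hbigdef
  have hmemBq : ∀ s ∈ γ, isBigSt M s → s ∈ Bq s.1 := by
    intro s hs h
    exact Finset.mem_filter.2 ⟨hs, rfl, h⟩
  have hbig_mem : ∀ s ∈ γ, isBigSt M s → bigMap s ∈ Bq' s.1 := by
    intro s hs h
    simp only [hbigdef, dif_pos (hmemBq s hs h)]
    exact Finset.coe_mem _
  have hbig_inj : ∀ s₁ ∈ γ, ∀ s₂ ∈ γ, isBigSt M s₁ → isBigSt M s₂ →
      bigMap s₁ = bigMap s₂ → s₁ = s₂ := by
    intro s₁ hs₁ s₂ hs₂ h₁ h₂ heq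
    have hq : s₁.1 = s₂.1 := by
      have e₁ := (Finset.mem_filter.1 (hbig_mem s₁ hs₁ h₁)).2.1
      have e₂ := (Finset.mem_filter.1 (hbig_mem s₂ hs₂ h₂)).2.1
      rw [← e₁, ← e₂, heq]
    obtain ⟨a, o₁⟩ := s₁
    obtain ⟨b, o₂⟩ := s₂
    have hab : a = b := hq
    subst hab
    have hm₁ : (a, o₁) ∈ Bq a := hmemBq _ hs₁ h₁
    have hm₂ : (a, o₂) ∈ Bq a := hmemBq _ hs₂ h₂
    simp only [hbigdef, dif_pos hm₁, dif_pos hm₂] at heq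
    have := (emb a).injective (Subtype.coe_injective heq)
    exact congrArg Subtype.val this
  -- exclusivity facts
  have hns : ∀ s : Q × Option ℝ≥0, isSmallSt M s → ¬ s.2 = none := by
    rintro s ⟨r, h1, -, -⟩ hn
    rw [hn] at h1; exact nomatch h1
  have hnf : ∀ s : Q × Option ℝ≥0, isFrSt M s → ¬ s.2 = none := by
    rintro s ⟨r, h1, -, -⟩ hn
    rw [hn] at h1; exact nomatch h1
  have hnb : ∀ s : Q × Option ℝ≥0, isBigSt M s → ¬ s.2 = none := by
    rintro s ⟨r, h1, -⟩ hn
    rw [hn] at h1; exact nomatch h1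
  have hsf : ∀ s : Q × Option ℝ≥0, isSmallSt M s → ¬ isFrSt M s := by
    intro s h1 h2
    have a1 := isSmallSt_val h1
    have a2 := isFrSt_val h2
    exact a2.2.2 a1.2.2
  have hsb : ∀ s : Q × Option ℝ≥0, isSmallSt M s → ¬ isBigSt M s := by
    intro s h1 h2
    exact (isBigSt_val h2).2 (isSmallSt_val h1).2.1
  have hfb : ∀ s : Q × Option ℝ≥0, isFrSt M s → ¬ isBigSt M s := by
    intro s h1 h2
    exact (isBigSt_val h2).2 (isFrSt_val h1).2.1
  -- the map F
  set F : (Q × Option ℝ≥0) → (Q × Option ℝ≥0) := fun s =>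
    if s.2 = none then s
    else if isSmallSt M s then s
    else if h : s ∈ γ ∧ isFrSt M s then Classical.choose (hFrKey s h.1 h.2)
    else bigMap s with hFdef
  have hF_none : ∀ s, s.2 = none → F s = s := by
    intro s h
    simp only [hFdef, if_pos h]
  have hF_small : ∀ s, isSmallSt M s → F s = s := by
    intro s h
    simp only [hFdef, if_neg (hns s h), if_pos h]
  have hF_fr : ∀ s (hs : s ∈ γ) (h : isFrSt M s),
      F s = Classical.choose (hFrKey s hs h) := by
    intro s hs h
    have h2 : ¬ isSmallSt M s := fun hc => hsf s hc h
    simp only [hFdef, if_neg (hnf s h), if_neg h2,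
      dif_pos (show s ∈ γ ∧ isFrSt M s from ⟨hs, h⟩)]
  have hF_big : ∀ s (hs : s ∈ γ) (h : isBigSt M s), F s = bigMap s := by
    intro s hs h
    have h2 : ¬ isSmallSt M s := fun hc => hsb s hc h
    have h3 : ¬ (s ∈ γ ∧ isFrSt M s) := fun hc => hfb s hc.2 h
    simp only [hFdef, if_neg (hnb s h), if_neg h2, dif_neg h3]
  have hFr_spec : ∀ s (hs : s ∈ γ) (h : isFrSt M s),
      F s ∈ γ' ∧ isFrSt M (F s) ∧ (F s).1 = s.1 ∧ stFloor (F s) = stFloor s ∧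
        stFract (F s) = φ (stFract s) := by
    intro s hs h
    rw [hF_fr s hs h]
    exact Classical.choose_spec (hFrKey s hs h)
  have hBig_spec : ∀ s (hs : s ∈ γ) (h : isBigSt M s),
      F s ∈ γ' ∧ (F s).1 = s.1 ∧ isBigSt M (F s) := by
    intro s hs h
    rw [hF_big s hs h]
    have hm := hbig_mem s hs h
    have := Finset.mem_filter.1 hm
    exact ⟨this.1, this.2.1, this.2.2⟩
  -- membership
  have hF1 : ∀ s ∈ γ, F s ∈ γ' := by
    intro s hs
    rcases state_classify M s with h | h | h | h
    · rw [hF_none s h]; exact hNone s hs h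
    · rw [hF_small s h]; exact hSmall s hs h
    · exact (hFr_spec s hs h).1
    · exact (hBig_spec s hs h).1
  -- locations
  have hF2 : ∀ s ∈ γ, (F s).1 = s.1 := by
    intro s hs
    rcases state_classify M s with h | h | h | h
    · rw [hF_none s h]
    · rw [hF_small s h]
    · exact (hFr_spec s hs h).2.2.1
    · exact (hBig_spec s hs h).2.1
  -- none iff
  have hF3 : ∀ s ∈ γ, ((F s).2 = none ↔ s.2 = none) := by
    intro s hs
    rcases state_classify M s with h | h | h | h
    · rw [hF_none s h]
    · rw [hF_small s h]
    · exact iff_of_false (hnf _ (hFr_spec s hs h).2.1) (hnf _ h)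
    · exact iff_of_false (hnb _ (hBig_spec s hs h).2.2) (hnb _ h)
  -- value conditions
  have hF4 : ∀ s ∈ γ, ∀ r r', s.2 = some r → (F s).2 = some r' →
      ((r ≤ (M : ℝ≥0)) ↔ (r' ≤ (M : ℝ≥0))) ∧
      (r ≤ (M : ℝ≥0) →
        (⌊(r : ℝ)⌋ = ⌊(r' : ℝ)⌋ ∧ (Int.fract (r : ℝ) = 0 ↔ Int.fract (r' : ℝ) = 0))) := by
    intro s hs r r' h2 h2'
    rcases state_classify M s with h | h | h | h
    · rw [h] at h2; exact nomatch h2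
    · rw [hF_small s h] at h2'
      rw [h2] at h2'
      obtain rfl : r = r' := Option.some_inj.1 h2'
      exact ⟨Iff.rfl, fun _ => ⟨rfl, Iff.rfl⟩⟩
    · obtain ⟨-, hfr', -, hfl, hfc⟩ := hFr_spec s hs h
      have hv : stVal s = r := stVal_some h2
      have hv' : stVal (F s) = r' := stVal_some h2'
      have hb1 : r ≤ (M : ℝ≥0) := by rw [← hv]; exact (isFrSt_val h).2.1
      have hb2 : r' ≤ (M : ℝ≥0) := by rw [← hv']; exact (isFrSt_val hfr').2.1
      refine ⟨iff_of_true hb1 hb2, fun _ => ⟨?_, ?_⟩⟩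
      · have : stFloor (F s) = stFloor s := hfl
        rw [stFloor, stFloor, hv, hv'] at this
        exact this.symm
      · have hz1 : Int.fract (r : ℝ) ≠ 0 := by
          rw [show (r : ℝ≥0) = stVal s from hv.symm]
          exact (isFrSt_val h).2.2
        have hz2 : Int.fract (r' : ℝ) ≠ 0 := by
          rw [show (r' : ℝ≥0) = stVal (F s) from hv'.symm]
          exact (isFrSt_val hfr').2.2
        exact iff_of_false hz1 hz2
    · obtain ⟨-, -, hbig'⟩ := hBig_spec s hs h
      have hv : stVal s = r := stVal_some h2
      have hv' : stVal (F s) = r' := stVal_some h2'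
      have hb1 : ¬ r ≤ (M : ℝ≥0) := by rw [← hv]; exact (isBigSt_val h).2
      have hb2 : ¬ r' ≤ (M : ℝ≥0) := by rw [← hv']; exact (isBigSt_val hbig').2
      exact ⟨iff_of_false hb1 hb2, fun hc => absurd hc hb1⟩
  -- pairwise fract condition
  have hfract_of_small : ∀ (s : Q × Option ℝ≥0) (h : isSmallSt M s) (r : ℝ≥0), s.2 = some r →
      Int.fract (r : ℝ) = 0 := by
    intro s h r hr
    have hv : stVal s = r := stVal_some hr
    rw [show (r : ℝ≥0) = stVal s from hv.symm]
    exact (isSmallSt_val h).2.2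
  have hfract_of_fr : ∀ (s : Q × Option ℝ≥0) (h : isFrSt M s) (r : ℝ≥0), s.2 = some r →
      Int.fract (r : ℝ) = stFract s := by
    intro s h r hr
    have hv : stVal s = r := stVal_some hr
    rw [show (r : ℝ≥0) = stVal s from hv.symm]
    exact rfl
  have hF5 : ∀ s₁ ∈ γ, ∀ s₂ ∈ γ, ∀ r₁ r₂ r₁' r₂',
      s₁.2 = some r₁ → s₂.2 = some r₂ → (F s₁).2 = some r₁' → (F s₂).2 = some r₂' →
      r₁ ≤ (M : ℝ≥0) → r₂ ≤ (M : ℝ≥0) →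
      (Int.fract (r₁ : ℝ) ≤ Int.fract (r₂ : ℝ) ↔
        Int.fract (r₁' : ℝ) ≤ Int.fract (r₂' : ℝ)) := by
    intro s₁ hs₁ s₂ hs₂ r₁ r₂ r₁' r₂' e₁ e₂ e₁' e₂' hm₁ hm₂
    have hc₁ : isSmallSt M s₁ ∨ isFrSt M s₁ := by
      rcases state_classify M s₁ with h | h | h | h
      · rw [h] at e₁; exact nomatch e₁
      · exact Or.inl h
      · exact Or.inr h
      · exact absurd hm₁ (by rw [← stVal_some e₁]; exact (isBigSt_val h).2)
    have hc₂ : isSmallSt M s₂ ∨ isFrSt M s₂ := by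
      rcases state_classify M s₂ with h | h | h | h
      · rw [h] at e₂; exact nomatch e₂
      · exact Or.inl h
      · exact Or.inr h
      · exact absurd hm₂ (by rw [← stVal_some e₂]; exact (isBigSt_val h).2)
    rcases hc₁ with h₁ | h₁ <;> rcases hc₂ with h₂ | h₂
    · -- small, small
      rw [hF_small s₁ h₁] at e₁'
      rw [hF_small s₂ h₂] at e₂'
      rw [e₁] at e₁'; rw [e₂] at e₂'
      obtain rfl := Option.some_inj.1 e₁'
      obtain rfl := Option.some_inj.1 e₂'
      exact Iff.rfl
    · -- small, fr
      rw [hF_small s₁ h₁] at e₁'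
      rw [e₁] at e₁'
      obtain rfl := Option.some_inj.1 e₁'
      have z₁ : Int.fract (r₁ : ℝ) = 0 := hfract_of_small s₁ h₁ r₁ e₁
      have z₂ : (0 : ℝ) ≤ Int.fract (r₂ : ℝ) := Int.fract_nonneg _
      have z₂' : (0 : ℝ) ≤ Int.fract (r₂' : ℝ) := Int.fract_nonneg _
      rw [z₁]
      exact iff_of_true z₂ z₂'
    · -- fr, small
      rw [hF_small s₂ h₂] at e₂'
      rw [e₂] at e₂'
      obtain rfl := Option.some_inj.1 e₂'
      have z₂ : Int.fract (r₂ : ℝ) = 0 := hfract_of_small s₂ h₂ r₂ e₂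
      have p₁ : 0 < Int.fract (r₁ : ℝ) := by
        rw [hfract_of_fr s₁ h₁ r₁ e₁]
        exact frFinset_pos (mem_frFinset hs₁ h₁)
      have p₁' : 0 < Int.fract (r₁' : ℝ) := by
        obtain ⟨-, hfr', -, -, hfc⟩ := hFr_spec s₁ hs₁ h₁
        rw [hfract_of_fr (F s₁) hfr' r₁' e₁', hfc]
        exact frFinset_pos (hφmem _ (mem_frFinset hs₁ h₁))
      rw [z₂]
      exact iff_of_false (not_le.2 p₁) (not_le.2 p₁')
    · -- fr, fr
      obtain ⟨-, hfr₁, -, -, hfc₁⟩ := hFr_spec s₁ hs₁ h₁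
      obtain ⟨-, hfr₂, -, -, hfc₂⟩ := hFr_spec s₂ hs₂ h₂
      rw [hfract_of_fr s₁ h₁ r₁ e₁, hfract_of_fr s₂ h₂ r₂ e₂,
        hfract_of_fr (F s₁) hfr₁ r₁' e₁', hfract_of_fr (F s₂) hfr₂ r₂' e₂',
        hfc₁, hfc₂]
      exact hφle _ (mem_frFinset hs₁ h₁) _ (mem_frFinset hs₂ h₂)
  -- injectivity
  have hinj : Set.InjOn F ↑γ := by
    intro s₁ hs₁' s₂ hs₂' heq
    have hs₁ : s₁ ∈ γ := hs₁'
    have hs₂ : s₂ ∈ γ := hs₂'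
    have kind_none : ∀ s (hs : s ∈ γ), s.2 = none → (F s).2 = none := by
      intro s hs h
      rw [hF_none s h]; exact h
    have kind_small : ∀ s (hs : s ∈ γ), isSmallSt M s → isSmallSt M (F s) := by
      intro s hs h
      rw [hF_small s h]; exact h
    rcases state_classify M s₁ with h1 | h1 | h1 | h1 <;>
      rcases state_classify M s₂ with h2 | h2 | h2 | h2
    · rw [hF_none s₁ h1, hF_none s₂ h2] at heq; exact heq
    · exact absurd (kind_none s₁ hs₁ h1) (by rw [heq]; exact hns _ (kind_small s₂ hs₂ h2))
    · exact absurd (kind_none s₁ hs₁ h1) (by rw [heq]; exact hnf _ (hFr_spec s₂ hs₂ h2).2.1)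
    · exact absurd (kind_none s₁ hs₁ h1) (by rw [heq]; exact hnb _ (hBig_spec s₂ hs₂ h2).2.2)
    · exact absurd (kind_none s₂ hs₂ h2) (by rw [← heq]; exact hns _ (kind_small s₁ hs₁ h1))
    · rw [hF_small s₁ h1, hF_small s₂ h2] at heq; exact heq
    · exact absurd (hFr_spec s₂ hs₂ h2).2.1 (by rw [← heq]; exact hsf _ (kind_small s₁ hs₁ h1))
    · exact absurd (hBig_spec s₂ hs₂ h2).2.2 (by rw [← heq]; exact hsb _ (kind_small s₁ hs₁ h1))
    · exact absurd (kind_none s₂ hs₂ h2) (by rw [← heq]; exact hnf _ (hFr_spec s₁ hs₁ h1).2.1)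
    · exact absurd (hFr_spec s₁ hs₁ h1).2.1 (by rw [heq]; exact hsf _ (kind_small s₂ hs₂ h2))
    · -- fr, fr
      obtain ⟨-, hfr₁, hl₁, hflo₁, hfc₁⟩ := hFr_spec s₁ hs₁ h1
      obtain ⟨-, hfr₂, hl₂, hflo₂, hfc₂⟩ := hFr_spec s₂ hs₂ h2
      have hfrq : stFract s₁ = stFract s₂ := by
        apply hφinj _ (mem_frFinset hs₁ h1) _ (mem_frFinset hs₂ h2)
        rw [← hfc₁, ← hfc₂, heq]
      have hfloq : stFloor s₁ = stFloor s₂ := by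
        rw [← hflo₁, ← hflo₂, heq]
      have hlq : s₁.1 = s₂.1 := by
        rw [← hl₁, ← hl₂, heq]
      exact state_eq_of hlq (isFrSt_val h1).1 (isFrSt_val h2).1 hfloq hfrq
    · exact absurd (hBig_spec s₂ hs₂ h2).2.2 (by rw [← heq]; exact hfb _ (hFr_spec s₁ hs₁ h1).2.1)
    · exact absurd (kind_none s₂ hs₂ h2) (by rw [← heq]; exact hnb _ (hBig_spec s₁ hs₁ h1).2.2)
    · exact absurd (hBig_spec s₁ hs₁ h1).2.2 (by rw [heq]; exact hsb _ (kind_small s₂ hs₂ h2))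
    · exact absurd (hBig_spec s₁ hs₁ h1).2.2 (by rw [heq]; exact hfb _ (hFr_spec s₂ hs₂ h2).2.1)
    · rw [hF_big s₁ hs₁ h1, hF_big s₂ hs₂ h2] at heq
      exact hbig_inj s₁ hs₁ s₂ hs₂ h1 h2 heq
  -- conclusion
  refine ⟨γ.image F, ?_, F, ?_, hF2, hF3, hF4, hF5⟩
  · intro t ht
    obtain ⟨s, hs, rfl⟩ := Finset.mem_image.1 ht
    exact hF1 s hs
  · rw [Finset.coe_image]
    exact hinj.bijOn_image

end RegionPart


namespace RegionPart

open List

variable {Q : Type*}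

noncomputable def cfgOf (V IA : Finset (Q × ℕ)) (ν : (Q × ℕ) → ℝ≥0) : Config Q :=
  V.image (fun y => (y.1, some (ν y))) ∪ IA.image (fun y => (y.1, (none : Option ℝ≥0)))

lemma cfgOf_card (V IA : Finset (Q × ℕ)) (ν : (Q × ℕ) → ℝ≥0) :
    (cfgOf V IA ν).card ≤ V.card + IA.card := by
  classical
  refine le_trans (Finset.card_union_le _ _) ?_
  exact Nat.add_le_add (Finset.card_image_le) (Finset.card_image_le)

lemma nodeSat_iff (Z : Zone Q) (IA : Finset (Q × ℕ))
    (hd : ∀ y ∈ Z.vars, y ∉ IA) (γ : Config Q) :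
    NodeSat Z.toSem IA γ ↔ ∃ ν, Z.satBy ν ∧ γ = cfgOf Z.vars IA ν := by
  classical
  constructor
  · rintro ⟨h, h1, h2, h3, h4, ν, h5, h6⟩
    refine ⟨ν, h6, ?_⟩
    apply Finset.ext
    intro s
    constructor
    · intro hs
      obtain ⟨y, hy, rfl⟩ := h3 s hs
      rcases Finset.mem_union.1 hy with hyv | hyi
      · refine Finset.mem_union.2 (Or.inl (Finset.mem_image.2 ⟨y, hyv, ?_⟩))
        exact (Prod.ext_iff.2 ⟨h1 y hy, h5 y hyv⟩).symm
      · refine Finset.mem_union.2 (Or.inr (Finset.mem_image.2 ⟨y, hyi, ?_⟩))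
        exact (Prod.ext_iff.2 ⟨h1 y hy, h4 y hyi⟩).symm
    · intro hs
      rcases Finset.mem_union.1 hs with hs | hs
      · obtain ⟨y, hyv, rfl⟩ := Finset.mem_image.1 hs
        have hy : y ∈ Z.toSem.vars ∪ IA := Finset.mem_union.2 (Or.inl hyv)
        have : h y = (y.1, some (ν y)) := Prod.ext_iff.2 ⟨h1 y hy, h5 y hyv⟩
        exact this ▸ h2 y hy
      · obtain ⟨y, hyi, rfl⟩ := Finset.mem_image.1 hs
        have hy : y ∈ Z.toSem.vars ∪ IA := Finset.mem_union.2 (Or.inr hyi)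
        have : h y = (y.1, (none : Option ℝ≥0)) := Prod.ext_iff.2 ⟨h1 y hy, h4 y hyi⟩
        exact this ▸ h2 y hy
  · rintro ⟨ν, hν, rfl⟩
    refine ⟨fun y => if y ∈ IA then (y.1, (none : Option ℝ≥0)) else (y.1, some (ν y)),
      ?_, ?_, ?_, ?_, ν, ?_, hν⟩
    · intro y _
      by_cases h : y ∈ IA <;> simp [h]
    · intro y hy
      dsimp only
      by_cases h : y ∈ IA
      · rw [if_pos h]
        exact Finset.mem_union.2 (Or.inr (Finset.mem_image.2 ⟨y, h, rfl⟩))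
      · rcases Finset.mem_union.1 hy with hyv | hyi
        · rw [if_neg h]
          exact Finset.mem_union.2 (Or.inl (Finset.mem_image.2 ⟨y, hyv, rfl⟩))
        · exact absurd hyi h
    · intro s hs
      rcases Finset.mem_union.1 hs with hs | hs
      · obtain ⟨y, hyv, rfl⟩ := Finset.mem_image.1 hs
        exact ⟨y, Finset.mem_union.2 (Or.inl hyv), by dsimp only; rw [if_neg (hd y hyv)]⟩
      · obtain ⟨y, hyi, rfl⟩ := Finset.mem_image.1 hs
        exact ⟨y, Finset.mem_union.2 (Or.inr hyi), by dsimp only; rw [if_pos hyi]⟩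
    · intro y hy
      dsimp only
      rw [if_pos hy]
    · intro y hy
      dsimp only
      rw [if_neg (hd y hy)]

/-! ### finiteness of bounded words -/

lemma finite_bounded_lists {β : Type*} {S : Set β} (hS : S.Finite) (k : ℕ) :
    {l : List β | (∀ c ∈ l, c ∈ S) ∧ l.length ≤ k}.Finite := by
  induction k with
  | zero =>
    apply Set.Finite.subset (Set.finite_singleton ([] : List β))
    rintro l ⟨-, h2⟩
    simp [show l = [] from List.length_eq_zero_iff.1 (Nat.le_zero.1 h2)]
  | succ k ih =>
    apply Set.Finite.subset
      (Set.Finite.insert ([] : List β)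
        ((hS.prod ih).image (fun p : β × List β => p.1 :: p.2)))
    rintro l ⟨h1, h2⟩
    cases l with
    | nil => exact Set.mem_insert _ _
    | cons c t =>
      refine Set.mem_insert_of_mem _ ⟨(c, t), ⟨h1 c mem_cons_self,
        ⟨fun d hd => h1 d (mem_cons_of_mem c hd), ?_⟩⟩, rfl⟩
      simpa using Nat.succ_le_succ_iff.1 h2

variable [Fintype Q]

noncomputable def LSet (M : ℕ) : Finset (Finset (Q × ℤ)) := by
  classical
  exact (Finset.univ ×ˢ Finset.Icc (0 : ℤ) (M : ℤ)).powerset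

def L0 (M : ℕ) : Set (AlphaT Q) :=
  ((fun p : Finset (Q × ℤ) × Finset Q => (Sum.inl p : AlphaT Q)) ''
    (↑(LSet (Q := Q) M) ×ˢ (Set.univ : Set (Finset Q)))) ∪
  (Sum.inr '' ((Sum.inl '' ↑(LSet (Q := Q) M)) ∪ (Sum.inr '' (Set.univ : Set Q))))

lemma L0_finite (M : ℕ) : (L0 (Q := Q) M).Finite := by
  classical
  apply Set.Finite.union
  · exact (((LSet (Q := Q) M).finite_toSet).prod (Set.finite_univ)).image _
  · exact (((((LSet (Q := Q) M).finite_toSet).image _)).union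
      ((Set.finite_univ).image _)).image _

lemma mem_LSet {M : ℕ} {A : Finset (Q × ℤ)}
    (h : ∀ p ∈ A, 0 ≤ p.2 ∧ p.2 ≤ (M : ℤ)) : A ∈ LSet (Q := Q) M := by
  classical
  rw [LSet]
  simp only [Finset.mem_powerset]
  intro p hp
  rw [Finset.mem_product]
  exact ⟨Finset.mem_univ _, Finset.mem_Icc.2 (h p hp)⟩

lemma floor_bounds {M : ℕ} {s : Q × Option ℝ≥0} {r : ℝ≥0}
    (h : s.2 = some r) (hM : r ≤ (M : ℝ≥0)) : 0 ≤ stFloor s ∧ stFloor s ≤ (M : ℤ) := by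
  have hv : stVal s = r := stVal_some h
  constructor
  · rw [stFloor]
    exact Int.floor_nonneg.2 (by positivity)
  · rw [stFloor, hv]
    calc ⌊(r : ℝ)⌋ ≤ ⌊((M : ℕ) : ℝ)⌋ := Int.floor_le_floor (by
        rw [show ((M : ℕ) : ℝ) = ((M : ℝ≥0) : ℝ) from by push_cast; ring]
        exact NNReal.coe_le_coe.2 hM)
      _ = (M : ℤ) := by rw [Int.floor_natCast]

lemma word_letters (M : ℕ) (γ : Config Q) :
    ∀ x ∈ wordOf M γ, x ∈ L0 (Q := Q) M := by
  intro x hx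
  rw [wordOf] at hx
  rcases mem_cons.1 hx with rfl | hx
  · refine Or.inl ⟨(smallLetter M γ, noneLocs γ), ⟨?_, Set.mem_univ _⟩, rfl⟩
    apply mem_LSet
    intro p hp
    obtain ⟨s, hs, rfl⟩ := Finset.mem_image.1 hp
    obtain ⟨r, h1, h2, -⟩ := (Finset.mem_filter.1 hs).2
    exact floor_bounds h1 h2
  · rcases mem_append.1 hx with hx | hx
    · obtain ⟨f, hf, rfl⟩ := mem_map.1 hx
      refine Or.inr ⟨Sum.inl (classAt M γ f), Or.inl ⟨classAt M γ f, ?_, rfl⟩, rfl⟩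
      apply mem_LSet
      intro p hp
      obtain ⟨s, hs, rfl⟩ := Finset.mem_image.1 hp
      obtain ⟨⟨r, h1, h2, -⟩, -⟩ := (Finset.mem_filter.1 hs).2
      exact floor_bounds h1 h2
    · obtain ⟨q, -, hx⟩ := mem_flatMap.1 hx
      rw [eq_of_mem_replicate hx]
      exact Or.inr ⟨Sum.inr q, Or.inr ⟨q, Set.mem_univ _, rfl⟩, rfl⟩

lemma word_length (M : ℕ) (γ : Config Q) :
    (wordOf M γ).length ≤ 1 + γ.card + Fintype.card Q * γ.card := by
  rw [wordOf]
  rw [length_cons, length_append, length_map]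
  have h1 : ((frFinset M γ).sort (· ≤ ·)).length ≤ γ.card := by
    rw [Finset.length_sort]
    exact le_trans (Finset.card_image_le) (Finset.card_filter_le _ _)
  have h2 : (Finset.univ.toList.flatMap fun q =>
      List.replicate (bigCnt M γ q) (Sum.inr (Sum.inr (q : Q)) : AlphaT Q)).length ≤
      Fintype.card Q * γ.card := by
    rw [length_flatMap]
    have : ∀ x ∈ Finset.univ.toList.map (fun q => (List.replicate (bigCnt M γ q)
        (Sum.inr (Sum.inr (q : Q)) : AlphaT Q)).length), x ≤ γ.card := by
      intro x hxx
      obtain ⟨q, -, rfl⟩ := mem_map.1 hxx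
      rw [length_replicate]
      exact Finset.card_filter_le _ _
    calc (Finset.univ.toList.map fun q => (List.replicate (bigCnt M γ q)
          (Sum.inr (Sum.inr (q : Q)) : AlphaT Q)).length).sum
        ≤ (Finset.univ.toList.map fun q => (List.replicate (bigCnt M γ q)
          (Sum.inr (Sum.inr (q : Q)) : AlphaT Q)).length).length • γ.card :=
          List.sum_le_card_nsmul _ _ this
      _ = Fintype.card Q * γ.card := by
          rw [length_map, Finset.length_toList, Finset.card_univ, smul_eq_mul]
  omega

end RegionPart


/-! ## STATEMENT 11 -/

/-- For every fixed `M`, node entailment is a well-quasi-order: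
every infinite sequence of nodes contains `i < j` with
`(Zᵢ,IAᵢ) ⊨_M (Zⱼ,IAⱼ)`. -/
theorem statement11 {Q : Type*} [Fintype Q] (M : ℕ)
    (Zs : ℕ → Zone Q) (IAs : ℕ → Finset (Q × ℕ))
    (hwf : ∀ n, (Zs n).wf)
    (hv : ∀ n, ∀ y ∈ (Zs n).vars, 1 ≤ y.2)
    (hia : ∀ n, ∀ y ∈ IAs n, y.2 = 0) :
    ∃ i j, i < j ∧ NodeEntails M (Zs i).toSem (IAs i) (Zs j).toSem (IAs j) := by
  classical
  by_cases hsat : ∀ n, 0 < n → ∃ ν, (Zs n).satBy ν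
  · -- all (positive-index) zones satisfiable
    have hdisj : ∀ n, ∀ y ∈ (Zs n).vars, y ∉ IAs n := by
      intro n y hy hc
      have h1 := hv n y hy
      have h2 := hia n y hc
      omega
    set T : ℕ → Set (List (RegionPart.AlphaT Q)) := fun n =>
      {w | ∃ ν, (Zs (n+1)).satBy ν ∧
        w = RegionPart.wordOf M (RegionPart.cfgOf (Zs (n+1)).vars (IAs (n+1)) ν)} with hTdef
    have hTfin : ∀ n, (T n).Finite := by
      intro n
      apply Set.Finite.subset (RegionPart.finite_bounded_lists (RegionPart.L0_finite (Q := Q) M)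
        (1 + ((Zs (n+1)).vars.card + (IAs (n+1)).card) +
          Fintype.card Q * ((Zs (n+1)).vars.card + (IAs (n+1)).card)))
      rintro w ⟨ν, -, rfl⟩
      refine ⟨RegionPart.word_letters M _, ?_⟩
      refine le_trans (RegionPart.word_length M _) ?_
      have hc := RegionPart.cfgOf_card (Zs (n+1)).vars (IAs (n+1)) ν
      have := Nat.mul_le_mul_left (Fintype.card Q) hc
      omega
    set FT : ℕ → Finset (List (RegionPart.AlphaT Q)) := fun n => (hTfin n).toFinset with hFTdef
    obtain ⟨i, j, hij, hent⟩ := WQOCore.smyth_words (RegionPart.L0 (Q := Q) M)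
      (RegionPart.L0_finite M) FT (by
        intro n w hw c hc
        rw [hFTdef] at hw
        obtain ⟨ν, -, rfl⟩ := (hTfin n).mem_toFinset.1 hw
        exact RegionPart.word_letters M _ c hc)
    refine ⟨i + 1, j + 1, by omega, ?_⟩
    intro γ' hγ'
    rw [RegionPart.nodeSat_iff _ _ (hdisj (j+1))] at hγ'
    obtain ⟨ν', hν', rfl⟩ := hγ'
    have hw' : RegionPart.wordOf M (RegionPart.cfgOf (Zs (j+1)).vars (IAs (j+1)) ν') ∈ FT j :=
      (hTfin j).mem_toFinset.2 ⟨ν', hν', rfl⟩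
    obtain ⟨w, hw, hsub⟩ := hent _ hw'
    obtain ⟨ν, hν, rfl⟩ := (hTfin i).mem_toFinset.1 hw
    refine ⟨RegionPart.cfgOf (Zs (i+1)).vars (IAs (i+1)) ν, ?_, ?_⟩
    · rw [RegionPart.nodeSat_iff _ _ (hdisj (i+1))]
      exact ⟨ν, hν, rfl⟩
    · obtain ⟨γ'', hsub', F, hbij, h2, h3, h4, h5⟩ :=
        RegionPart.cfgEntails_of_word_sublist M _ _ hsub
      exact ⟨γ'', hsub', F, hbij, h2, h3, h4, h5⟩
  · -- some zone with positive index is unsatisfiable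
    push_neg at hsat
    obtain ⟨j, hj, hns⟩ := hsat
    refine ⟨0, j, hj, ?_⟩
    intro γ' hγ'
    have hdisj : ∀ y ∈ (Zs j).vars, y ∉ IAs j := by
      intro y hy hc
      have h1 := hv j y hy
      have h2 := hia j y hc
      omega
    rw [RegionPart.nodeSat_iff _ _ hdisj] at hγ'
    obtain ⟨ν, hν, -⟩ := hγ'
    exact absurd hν (by simpa using hns ν)


end ATAPaper
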